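/- arXiv:1110.2300 — 6 statements merged into one kernel-verified Lean document; each statement's English description precedes it below -/
import Mathlib

section
/- Let R be a commutative Noetherian ring, I ⊆ R an ideal, and P ⊂ R a prime ideal such that P is not contained in P' for every associated prime P' of R/I. Let k be a positive integer such that I is not contained in the k-th symbolic power P^(k) of P. Then the set of associated primes of R/(I ∩ P^(k)) equals Ass(R/I) ∪ {P}. -/
/-- The `k`-th symbolic power of a prime ideal `P`: the preimage in `R` of
`P^k R_P` under the localization map `R → R_P`. -/
noncomputable def Ideal.symbolicPower {R : Type*} [CommRing R] (P : Ideal R)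
    (hP : P.IsPrime) (k : ℕ) : Ideal R :=
  letI := hP
  (Ideal.map (algebraMap R (Localization.AtPrime P)) (P ^ k)).comap
    (algebraMap R (Localization.AtPrime P))

section Aux

variable {R : Type*} [CommRing R]

lemma mem_ann_mk_iff (K : Ideal R) (x a : R) :
    a ∈ (⊥ : Submodule R (R ⧸ K)).colon {(Ideal.Quotient.mk K x : R ⧸ K)} ↔ a * x ∈ K := by
  rw [Submodule.mem_colon_singleton, Submodule.mem_bot, ← Ideal.Quotient.mk_eq_mk,
    ← Submodule.Quotient.mk_smul, smul_eq_mul, Submodule.Quotient.mk_eq_zero]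

lemma symbolicPower_radical (P : Ideal R) (hP : P.IsPrime) {k : ℕ} (hk : 0 < k) :
    (P.symbolicPower hP k).radical = P := by
  haveI := hP
  show (Ideal.comap _ _).radical = P
  rw [← Ideal.comap_radical, Ideal.map_pow, Ideal.radical_pow _ hk.ne',
    Localization.AtPrime.map_eq_maximalIdeal,
    (IsLocalRing.maximalIdeal.isMaximal _).isPrime.radical,
    ← Ideal.under_def, Localization.AtPrime.under_maximalIdeal]

lemma symbolicPower_isPrimary (P : Ideal R) (hP : P.IsPrime) {k : ℕ} (hk : 0 < k) :
    (P.symbolicPower hP k).IsPrimary := by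
  haveI := hP
  have hmrad : (Ideal.map (algebraMap R (Localization.AtPrime P)) (P ^ k)).radical =
      IsLocalRing.maximalIdeal (Localization.AtPrime P) := by
    rw [Ideal.map_pow, Ideal.radical_pow _ hk.ne',
      Localization.AtPrime.map_eq_maximalIdeal,
      (IsLocalRing.maximalIdeal.isMaximal _).isPrime.radical]
  have hprim : (Ideal.map (algebraMap R (Localization.AtPrime P)) (P ^ k)).IsPrimary :=
    Ideal.isPrimary_of_isMaximal_radical (hmrad ▸ IsLocalRing.maximalIdeal.isMaximal _)
  rw [Ideal.isPrimary_iff]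
  constructor
  · intro h
    apply hP.ne_top
    rw [← symbolicPower_radical P hP hk, h]
    simp [Ideal.radical_eq_sInf]
  · intro x y hxy
    have hfxy : algebraMap R (Localization.AtPrime P) x *
        algebraMap R (Localization.AtPrime P) y ∈
        Ideal.map (algebraMap R (Localization.AtPrime P)) (P ^ k) := by
      rw [← map_mul]; exact hxy
    rcases (Ideal.isPrimary_iff.mp hprim).2 hfxy with h | h
    · exact Or.inl h
    · right
      have : y ∈ Ideal.comap (algebraMap R (Localization.AtPrime P))
          (Ideal.map (algebraMap R (Localization.AtPrime P)) (P ^ k)).radical := h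
      rwa [Ideal.comap_radical] at this

end Aux

theorem stmt0 {R : Type*} [CommRing R] [IsNoetherianRing R]
    (I P : Ideal R) (hP : P.IsPrime)
    (hnc : ∀ P' ∈ associatedPrimes R (R ⧸ I), ¬ P ≤ P')
    (k : ℕ) (hk : 0 < k) (hIs : ¬ I ≤ P.symbolicPower hP k) :
    associatedPrimes R (R ⧸ (I ⊓ P.symbolicPower hP k)) =
      associatedPrimes R (R ⧸ I) ∪ {P} := by
  set Q := P.symbolicPower hP k with hQ
  have hQprimary := symbolicPower_isPrimary P hP hk
  have hQrad := symbolicPower_radical P hP hk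
  have hPk_le : P ^ k ≤ Q := Ideal.le_comap_map
  ext P'
  simp only [Set.mem_union, Set.mem_singleton_iff, AssociatedPrimes.mem_iff, isAssociatedPrime_iff]
  constructor
  · rintro ⟨hp, xb, hx⟩
    obtain ⟨x, rfl⟩ := Ideal.Quotient.mk_surjective xb
    have hchar : ∀ a, a ∈ P' ↔ a * x ∈ I ⊓ Q := fun a => by
      rw [hx]; exact mem_ann_mk_iff _ x a
    by_cases hcase : ∃ b, b * x ∈ Q ∧ b ∉ P'
    · left
      refine ⟨hp, Ideal.Quotient.mk I x, ?_⟩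
      ext a
      rw [mem_ann_mk_iff]
      constructor
      · intro ha; exact ((hchar a).mp ha).1
      · intro ha
        obtain ⟨b, hbQ, hbP⟩ := hcase
        have hab : (a * b) * x ∈ I ⊓ Q := by
          constructor
          · rw [show (a * b) * x = (a * x) * b by ring]; exact I.mul_mem_right b ha
          · rw [show (a * b) * x = a * (b * x) by ring]; exact Q.mul_mem_left a hbQ
        exact (hp.mem_or_mem ((hchar _).mpr hab)).resolve_right hbP
    · push_neg at hcase
      right
      have hxQ : x ∉ Q := fun h => hp.ne_top (Ideal.eq_top_iff_one _ |>.mpr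
        (hcase 1 (by simpa using h)))
      apply le_antisymm
      · intro a ha
        have haxQ : x * a ∈ Q := by rw [mul_comm]; exact ((hchar a).mp ha).2
        rcases (Ideal.isPrimary_iff.mp hQprimary).2 haxQ with h | h
        · exact absurd h hxQ
        · rwa [hQrad] at h
      · intro a ha
        rw [← hQrad] at ha
        obtain ⟨n, hn⟩ := Ideal.mem_radical_iff.mp ha
        have : a ^ n ∈ P' := hcase _ (Q.mul_mem_right x hn)
        exact hp.mem_of_pow_mem n this
  · rintro (⟨hp, xb, hx⟩ | rfl)
    · obtain ⟨x, rfl⟩ := Ideal.Quotient.mk_surjective xb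
      have hchar : ∀ a, a ∈ P' ↔ a * x ∈ I := fun a => by
        rw [hx]; exact mem_ann_mk_iff _ x a
      obtain ⟨s, hsP, hsP'⟩ := SetLike.not_le_iff_exists.mp (hnc P' (isAssociatedPrime_iff.mpr ⟨hp, _, hx⟩))
      have hskP' : s ^ k ∉ P' := fun h => hsP' (hp.mem_of_pow_mem k h)
      have hskQ : s ^ k ∈ Q := hPk_le (Ideal.pow_mem_pow hsP k)
      refine ⟨hp, Ideal.Quotient.mk _ (s ^ k * x), ?_⟩
      ext a
      rw [mem_ann_mk_iff]
      constructor
      · intro ha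
        constructor
        · rw [show a * (s ^ k * x) = (a * x) * s ^ k by ring]
          exact I.mul_mem_right _ ((hchar a).mp ha)
        · rw [show a * (s ^ k * x) = (a * x) * s ^ k by ring]
          exact Q.mul_mem_left _ hskQ
      · rintro ⟨haI, -⟩
        have : (a * s ^ k) * x ∈ I := by
          rw [show (a * s ^ k) * x = a * (s ^ k * x) by ring]; exact haI
        exact (hp.mem_or_mem ((hchar _).mpr this)).resolve_right hskP'
    · obtain ⟨x, hxI, hxQ⟩ := SetLike.not_le_iff_exists.mp hIs
      set C : Ideal R := Q.colon (Ideal.span {x}) with hC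
      have hmemC : ∀ a, a ∈ C ↔ a * x ∈ Q := fun a => Ideal.mem_colon_span_singleton
      have hC_ne : C ≠ ⊤ := fun h => hxQ (by
        have h1 : (1 : R) ∈ C := h ▸ Submodule.mem_top
        rwa [hmemC, one_mul] at h1)
      haveI : Nontrivial (R ⧸ C) := Ideal.Quotient.nontrivial_iff.mpr hC_ne
      obtain ⟨P'', hP''⟩ := associatedPrimes.nonempty R (R ⧸ C)
      obtain ⟨hp'', yb, hy⟩ := isAssociatedPrime_iff.mp hP''
      obtain ⟨y, rfl⟩ := Ideal.Quotient.mk_surjective yb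
      have hchar : ∀ a, a ∈ P'' ↔ (a * y) * x ∈ Q := fun a => by
        rw [hy, mem_ann_mk_iff, hmemC]
      have hyx : y * x ∉ Q := fun h => hp''.ne_top (Ideal.eq_top_iff_one _ |>.mpr
        ((hchar 1).mpr (by rwa [one_mul])))
      have hPP : P'' = P' := by
        apply le_antisymm
        · intro a ha
          have : (y * x) * a ∈ Q := by
            rw [show (y * x) * a = (a * y) * x by ring]; exact (hchar a).mp ha
          rcases (Ideal.isPrimary_iff.mp hQprimary).2 this with h | h
          · exact absurd h hyx
          · rwa [hQrad] at h
        · intro a ha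
          rw [← hQrad] at ha
          obtain ⟨n, hn⟩ := Ideal.mem_radical_iff.mp ha
          have : a ^ n ∈ P'' := (hchar _).mpr (by
            rw [show (a ^ n * y) * x = a ^ n * (y * x) by ring]
            exact Q.mul_mem_right _ hn)
          exact hp''.mem_of_pow_mem n this
      refine ⟨hP, Ideal.Quotient.mk _ (y * x), ?_⟩
      ext a
      rw [mem_ann_mk_iff]
      constructor
      · intro ha
        constructor
        · exact I.mul_mem_left a (I.mul_mem_left y hxI)
        · have : a ∈ P'' := hPP ▸ ha
          rw [show a * (y * x) = (a * y) * x by ring]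
          exact (hchar a).mp this
      · rintro ⟨-, haQ⟩
        have : a ∈ P'' := (hchar a).mpr (by
          rw [show (a * y) * x = a * (y * x) by ring]; exact haQ)
        exact hPP ▸ this
end

section
/- Let K be a field, S = K[x_1, ..., x_n] the polynomial ring, and let P_1, ..., P_m ⊂ S be an arbitrary finite collection of nonzero monomial prime ideals. Then there exists a monomial ideal I ⊆ S and an integer s_0 such that for every s ≥ s_0, the set of associated primes of S/I^s equals {P_1, ..., P_m}; that is, Ass^∞(I) = {P_1, ..., P_m}. -/
open MvPolynomial

/-- A monomial ideal: an ideal generated by monomials. -/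
def IsMonomialIdeal {K : Type*} [Field K] {n : ℕ}
    (I : Ideal (MvPolynomial (Fin n) K)) : Prop :=
  ∃ A : Set (Fin n →₀ ℕ),
    I = Ideal.span ((fun a => (monomial a (1 : K) : MvPolynomial (Fin n) K)) '' A)

/-- A nonzero monomial prime ideal: an ideal of the form `P_F = ({x_i : i ∈ F})`
for a nonempty subset `F ⊆ {1, ..., n}`. -/
def IsNonzeroMonomialPrime {K : Type*} [Field K] {n : ℕ}
    (P : Ideal (MvPolynomial (Fin n) K)) : Prop :=
  ∃ F : Set (Fin n), F.Nonempty ∧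
    P = Ideal.span ((X : Fin n → MvPolynomial (Fin n) K) '' F)

namespace Stmt3Aux

open Finset

variable {n m : ℕ}

/-- weight of an exponent vector along a finset of variables -/
def w (F : Finset (Fin n)) (a : Fin n →₀ ℕ) : ℕ := ∑ j ∈ F, a j

lemma w_add (F : Finset (Fin n)) (a b : Fin n →₀ ℕ) : w F (a + b) = w F a + w F b := by
  simp [w, Finset.sum_add_distrib]

lemma w_mono {F : Finset (Fin n)} {a b : Fin n →₀ ℕ} (h : a ≤ b) : w F a ≤ w F b :=
  Finset.sum_le_sum fun j _ => Finsupp.le_def.mp h j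

lemma w_tsub {F : Finset (Fin n)} {a b : Fin n →₀ ℕ} (h : b ≤ a) :
    w F (a - b) = w F a - w F b := by
  have h1 : w F (a - b) + w F b = w F a := by
    rw [← w_add]; rw [tsub_add_cancel_of_le h]
  omega

lemma w_smul (F : Finset (Fin n)) (c : ℕ) (a : Fin n →₀ ℕ) : w F (c • a) = c * w F a := by
  simp [w, Finset.mul_sum]

variable (Fv : Fin m → Finset (Fin n)) (cc : Fin m → ℕ)

/-- The monoid of pairs (exponent vector, degree) satisfying the covering inequalities. -/
noncomputable def CC : AddSubmonoid ((Fin n →₀ ℕ) × ℕ) where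
  carrier := {x | ∀ i, cc i * x.2 ≤ w (Fv i) x.1}
  zero_mem' := by intro i; simp [w]
  add_mem' := by
    intro x y hx hy i
    simp only [Prod.snd_add, Prod.fst_add]
    rw [w_add, mul_add]
    exact add_le_add (hx i) (hy i)

lemma mem_CC {x : (Fin n →₀ ℕ) × ℕ} : x ∈ CC Fv cc ↔ ∀ i, cc i * x.2 ≤ w (Fv i) x.1 :=
  Iff.rfl

/-- embedding into a pointwise-ordered function space for Dickson's lemma -/
def Ψ (x : (Fin n →₀ ℕ) × ℕ) : (Fin n ⊕ Unit ⊕ Fin m) → ℕ :=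
  Sum.elim (fun j => x.1 j) (Sum.elim (fun _ => x.2) (fun i => w (Fv i) x.1 - cc i * x.2))

lemma psi_le_components {x y : (Fin n →₀ ℕ) × ℕ} (h : Ψ Fv cc x ≤ Ψ Fv cc y) :
    x.1 ≤ y.1 ∧ x.2 ≤ y.2 ∧
      ∀ i, w (Fv i) x.1 - cc i * x.2 ≤ w (Fv i) y.1 - cc i * y.2 := by
  refine ⟨Finsupp.le_def.mpr fun j => h (Sum.inl j), h (Sum.inr (Sum.inl ())), fun i => h (Sum.inr (Sum.inr i))⟩

lemma sub_mem_of_psi_le {x y : (Fin n →₀ ℕ) × ℕ} (hx : x ∈ CC Fv cc) (hy : y ∈ CC Fv cc)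
    (h : Ψ Fv cc x ≤ Ψ Fv cc y) : (y.1 - x.1, y.2 - x.2) ∈ CC Fv cc := by
  obtain ⟨h1, h2, h3⟩ := psi_le_components Fv cc h
  intro i
  have hw : w (Fv i) (y.1 - x.1) = w (Fv i) y.1 - w (Fv i) x.1 := w_tsub h1
  have hx' := hx i
  have hy' := hy i
  have h3' := h3 i
  have hmul : cc i * (y.2 - x.2) = cc i * y.2 - cc i * x.2 := mul_tsub _ _ _
  rw [hw, hmul]
  have : cc i * x.2 ≤ cc i * y.2 := Nat.mul_le_mul_left _ h2
  omega

/-- the measure used for induction -/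
def μ (x : (Fin n →₀ ℕ) × ℕ) : ℕ := x.2 + w Finset.univ x.1

lemma eq_of_psi_le_of_mu_le {x y : (Fin n →₀ ℕ) × ℕ} (h : Ψ Fv cc x ≤ Ψ Fv cc y)
    (hμ : μ y ≤ μ x) : x = y := by
  obtain ⟨h1, h2, -⟩ := psi_le_components Fv cc h
  have hsum : w Finset.univ x.1 ≤ w Finset.univ y.1 := w_mono h1
  have hμx : μ x = x.2 + w Finset.univ x.1 := rfl
  have hμy : μ y = y.2 + w Finset.univ y.1 := rfl
  have h2' : x.2 = y.2 := by omega
  have hsum' : w Finset.univ x.1 = w Finset.univ y.1 := by omega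
  have h1' : x.1 = y.1 := by
    ext j
    have hle := Finsupp.le_def.mp h1
    have hsum'' : ∑ i ∈ Finset.univ, x.1 i = ∑ i ∈ Finset.univ, y.1 i := hsum'
    exact (Finset.sum_eq_sum_iff_of_le (fun j _ => hle j)).mp hsum'' j (Finset.mem_univ j)
  exact Prod.ext h1' h2'

def CCpos : Set ((Fin n →₀ ℕ) × ℕ) := {x | x ∈ CC Fv cc ∧ 1 ≤ x.2}

def MinSet : Set ((Fin n →₀ ℕ) × ℕ) :=
  {z ∈ CCpos Fv cc | ∀ y ∈ CCpos Fv cc, Ψ Fv cc y ≤ Ψ Fv cc z → y = z}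

lemma minset_finite : (MinSet Fv cc).Finite := by
  by_contra hinf
  have hinf' : (MinSet Fv cc).Infinite := hinf
  obtain f := hinf'.natEmbedding
  have hpwo : (Set.univ : Set (Fin n ⊕ Unit ⊕ Fin m → ℕ)).IsPWO :=
    Set.isPWO_of_wellQuasiOrderedLE Set.univ
  obtain ⟨a, b, hab, hle⟩ := Set.PartiallyWellOrderedOn.exists_lt hpwo (f := fun N => Ψ Fv cc (f N)) (fun _ => trivial)
  have hmin := (f b).2.2 (f a) (f a).2.1 hle
  have : (f a : (Fin n →₀ ℕ) × ℕ) = f b := hmin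
  have : f a = f b := Subtype.ext this
  exact absurd (f.injective this) (Nat.ne_of_lt hab)

theorem gen : ∀ x ∈ CC Fv cc, ∃ ms : Multiset ((Fin n →₀ ℕ) × ℕ),
    (∀ z ∈ ms, z ∈ MinSet Fv cc) ∧ (ms.map Prod.snd).sum = x.2 ∧
      (ms.map Prod.fst).sum ≤ x.1 := by
  suffices H : ∀ N x, μ x = N → x ∈ CC Fv cc → ∃ ms : Multiset ((Fin n →₀ ℕ) × ℕ),
      (∀ z ∈ ms, z ∈ MinSet Fv cc) ∧ (ms.map Prod.snd).sum = x.2 ∧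
        (ms.map Prod.fst).sum ≤ x.1 by
    intro x hx; exact H (μ x) x rfl hx
  intro N
  induction N using Nat.strong_induction_on with
  | _ N ih =>
    intro x hμx hx
    rcases Nat.eq_zero_or_pos x.2 with h0 | hpos
    · exact ⟨0, by simp, by simp [h0], by simp⟩
    · -- pick a minimal element below x
      set S : Set ((Fin n →₀ ℕ) × ℕ) := {y | y ∈ CCpos Fv cc ∧ Ψ Fv cc y ≤ Ψ Fv cc x} with hS
      have hxS : x ∈ S := ⟨⟨hx, hpos⟩, le_rfl⟩
      have hne : (μ '' S).Nonempty := ⟨μ x, x, hxS, rfl⟩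
      obtain ⟨z, hzS, hzμ⟩ := Nat.sInf_mem hne
      have hzmin : z ∈ MinSet Fv cc := by
        refine ⟨hzS.1, fun y hy hle => ?_⟩
        have hyS : y ∈ S := ⟨hy, le_trans hle hzS.2⟩
        have : sInf (μ '' S) ≤ μ y := Nat.sInf_le ⟨y, hyS, rfl⟩
        exact eq_of_psi_le_of_mu_le Fv cc hle (by omega)
      have hzCC : z ∈ CC Fv cc := hzS.1.1
      have hzpos : 1 ≤ z.2 := hzS.1.2
      have hzle := psi_le_components Fv cc hzS.2
      set x' : (Fin n →₀ ℕ) × ℕ := (x.1 - z.1, x.2 - z.2) with hx'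
      have hx'1 : x'.1 = x.1 - z.1 := rfl
      have hx'2 : x'.2 = x.2 - z.2 := rfl
      have hx'CC : x' ∈ CC Fv cc := sub_mem_of_psi_le Fv cc hzCC hx hzS.2
      have hμ' : μ x' < N := by
        have h1 : w Finset.univ (x.1 - z.1) = w Finset.univ x.1 - w Finset.univ z.1 :=
          w_tsub hzle.1
        have h2 : w Finset.univ z.1 ≤ w Finset.univ x.1 := w_mono hzle.1
        have h3 : z.2 ≤ x.2 := hzle.2.1
        have e1 : μ x' = x.2 - z.2 + (w Finset.univ x.1 - w Finset.univ z.1) := by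
          simp only [μ, hx'1, hx'2, h1]
        have e2 : N = x.2 + w Finset.univ x.1 := by rw [← hμx]; rfl
        omega
      obtain ⟨ms', hms1, hms2, hms3⟩ := ih (μ x') hμ' x' rfl hx'CC
      refine ⟨z ::ₘ ms', ?_, ?_, ?_⟩
      · intro t ht
        rcases Multiset.mem_cons.mp ht with h | h
        · exact h ▸ hzmin
        · exact hms1 t h
      · rw [Multiset.map_cons, Multiset.sum_cons, hms2, hx'2]
        have : z.2 ≤ x.2 := hzle.2.1
        omega
      · rw [Multiset.map_cons, Multiset.sum_cons]
        have hms3' : (ms'.map Prod.fst).sum ≤ x.1 - z.1 := hx'1 ▸ hms3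
        calc z.1 + (ms'.map Prod.fst).sum ≤ z.1 + (x.1 - z.1) := add_le_add_right hms3' _
        _ = x.1 := by rw [add_tsub_cancel_of_le hzle.1]


section Counting

lemma multiset_sum_map_eq {α M : Type*} [AddCommMonoid M] [DecidableEq α] (ms : Multiset α)
    (S : Finset α) (hms : ∀ z ∈ ms, z ∈ S) (f : α → M) :
    (ms.map f).sum = ∑ z ∈ S, ms.count z • f z := by
  induction ms using Multiset.induction with
  | empty => simp
  | cons a t ih =>
    have ha : a ∈ S := hms a (Multiset.mem_cons_self a t)
    rw [Multiset.map_cons, Multiset.sum_cons,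
      ih (fun z hz => hms z (Multiset.mem_cons_of_mem hz))]
    have hcongr : ∀ z ∈ S, (a ::ₘ t).count z • f z
        = t.count z • f z + (if z = a then f z else 0) := by
      intro z hz
      rw [Multiset.count_cons, add_smul]
      congr 1
      split_ifs <;> simp
    rw [Finset.sum_congr rfl hcongr, Finset.sum_add_distrib, Finset.sum_ite_eq' S a f, if_pos ha]
    abel

lemma list_sum_mem_CC {ℓ' : ℕ} : ∀ L : List (Fin n →₀ ℕ), (∀ v ∈ L, ((v, ℓ') ∈ CC Fv cc)) →
    (L.sum, ℓ' * L.length) ∈ CC Fv cc := by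
  intro L
  induction L with
  | nil => intro _; simp only [List.sum_nil, List.length_nil, Nat.mul_zero]; exact (CC Fv cc).zero_mem
  | cons v t ih =>
    intro hmem
    have h1 : (v, ℓ') ∈ CC Fv cc := hmem v List.mem_cons_self
    have h2 := ih (fun b hb => hmem b (List.mem_cons_of_mem v hb))
    have heq : ((v :: t).sum, ℓ' * (v :: t).length) = (v, ℓ') + (t.sum, ℓ' * t.length) := by
      refine Prod.ext ?_ ?_
      · simp [List.sum_cons]
      · simp only [List.length_cons, Prod.snd_add]
        rw [Nat.mul_succ]; omega
    rw [heq]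
    exact (CC Fv cc).add_mem h1 h2

end Counting

theorem main_decomp : ∃ k : ℕ, 1 ≤ k ∧ ∀ s : ℕ, 1 ≤ s → ∀ a : Fin n →₀ ℕ,
    (a, k * s) ∈ CC Fv cc → ∃ L : List (Fin n →₀ ℕ), L.length = s ∧
      (∀ b ∈ L, (b, k) ∈ CC Fv cc) ∧ L.sum ≤ a := by
  classical
  set Mf : Finset ((Fin n →₀ ℕ) × ℕ) := (minset_finite Fv cc).toFinset with hMf
  have hMfmem : ∀ z ∈ Mf, z ∈ MinSet Fv cc := fun z hz => (Set.Finite.mem_toFinset _).mp hz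
  have hMfpos : ∀ z ∈ Mf, 1 ≤ z.2 := fun z hz => (hMfmem z hz).1.2
  have hMfCC : ∀ z ∈ Mf, z ∈ CC Fv cc := fun z hz => (hMfmem z hz).1.1
  set ℓ : ℕ := Mf.lcm Prod.snd with hℓ
  have hdvd : ∀ z ∈ Mf, z.2 ∣ ℓ := fun z hz => Finset.dvd_lcm hz
  have hℓpos : 1 ≤ ℓ := by
    rcases Nat.eq_zero_or_pos ℓ with h0 | h' 
    · exfalso
      rw [hℓ, Finset.lcm_eq_zero_iff] at h0
      obtain ⟨z, hz, hz0⟩ := h0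
      have := hMfpos z hz
      omega
    · exact h'
  set h : ℕ := Mf.card + 1 with hh
  refine ⟨ℓ * h, Nat.one_le_iff_ne_zero.mpr (by positivity), ?_⟩
  set k : ℕ := ℓ * h with hk
  -- the splitting sub-lemma
  have SPLIT : ∀ s, 1 ≤ s → ∀ (W : Fin n →₀ ℕ) (d : ℕ) (L : List (Fin n →₀ ℕ)),
      d + 1 ≤ h → (W, ℓ * d) ∈ CC Fv cc → (∀ v ∈ L, (v, ℓ) ∈ CC Fv cc) →
      L.length = h * s - d → ∃ out : List (Fin n →₀ ℕ), out.length = s ∧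
        (∀ b ∈ out, (b, k) ∈ CC Fv cc) ∧ out.sum = W + L.sum := by
    intro s hs
    induction s, hs using Nat.le_induction with
    | base =>
      intro W d L hd hW hL hlen
      refine ⟨[W + L.sum], rfl, ?_, by simp⟩
      intro b hb
      rw [List.mem_singleton] at hb
      subst hb
      have hLsum := list_sum_mem_CC Fv cc L hL
      have := (CC Fv cc).add_mem hW hLsum
      have heq : (W, ℓ * d) + (L.sum, ℓ * L.length) = (W + L.sum, k) := by
        refine Prod.ext rfl ?_
        simp only [Prod.snd_add]
        rw [hlen, hk, ← Nat.mul_add]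
        congr 1
        omega
      rwa [heq] at this
    | succ s hs ih =>
      intro W d L hd hW hL hlen
      have hmulsucc : h * (s + 1) = h * s + h := Nat.mul_succ h s
      have hhs : h ≤ h * s := Nat.le_mul_of_pos_right h (by omega)
      have hlenge : h ≤ L.length := by rw [hlen]; omega
      set L₁ := L.take h with hL₁
      set L₂ := L.drop h with hL₂
      have hlen₁ : L₁.length = h := by
        rw [hL₁, List.length_take]; omega
      have hlen₂ : L₂.length = h * s - d := by
        rw [hL₂, List.length_drop]; omega
      have hmem₁ : ∀ v ∈ L₁, (v, ℓ) ∈ CC Fv cc := fun v hv => hL v (List.mem_of_mem_take hv)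
      have hmem₂ : ∀ v ∈ L₂, (v, ℓ) ∈ CC Fv cc := fun v hv => hL v (List.mem_of_mem_drop hv)
      obtain ⟨out, hout1, hout2, hout3⟩ := ih W d L₂ hd hW hmem₂ hlen₂
      refine ⟨L₁.sum :: out, by simp [hout1], ?_, ?_⟩
      · intro b hb
        rcases List.mem_cons.mp hb with rfl | hb'
        · have := list_sum_mem_CC Fv cc L₁ hmem₁
          rwa [hlen₁, ← hk] at this
        · exact hout2 b hb'
      · rw [List.sum_cons, hout3]
        have : L₁.sum + L₂.sum = L.sum := by
          rw [hL₁, hL₂, ← List.sum_append, List.take_append_drop]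
        rw [← this]
        abel
  -- main argument
  intro s hs a haCC
  obtain ⟨ms, hm1, hm2, hm3⟩ := gen Fv cc (a, k * s) haCC
  have hmsMf : ∀ z ∈ ms, z ∈ Mf := fun z hz => (Set.Finite.mem_toFinset _).mpr (hm1 z hz)
  have hc2 : ∑ z ∈ Mf, ms.count z • z.2 = k * s := by
    rw [← multiset_sum_map_eq ms Mf hmsMf Prod.snd]; exact hm2
  have hc1 : ∑ z ∈ Mf, ms.count z • z.1 ≤ a := by
    rw [← multiset_sum_map_eq ms Mf hmsMf Prod.fst]; exact hm3
  -- block sizes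
  set Dz : (Fin n →₀ ℕ) × ℕ → ℕ := fun z => ℓ / z.2 with hDz
  set q : (Fin n →₀ ℕ) × ℕ → ℕ := fun z => ms.count z / Dz z with hq
  set r : (Fin n →₀ ℕ) × ℕ → ℕ := fun z => ms.count z % Dz z with hr
  have hDzmul : ∀ z ∈ Mf, Dz z * z.2 = ℓ := fun z hz => Nat.div_mul_cancel (hdvd z hz)
  have hDzpos : ∀ z ∈ Mf, 1 ≤ Dz z := by
    intro z hz
    have h1 := hMfpos z hz
    have h2 := hDzmul z hz
    by_contra hcon
    have : Dz z = 0 := by omega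
    rw [this] at h2; simp at h2; omega
  have hcount : ∀ z, ms.count z = q z * Dz z + r z := by
    intro z
    show ms.count z = ms.count z / Dz z * Dz z + ms.count z % Dz z
    exact (Nat.div_add_mod' (ms.count z) (Dz z)).symm
  set wvec : Fin n →₀ ℕ := ∑ z ∈ Mf, r z • z.1 with hwvec
  set dl : ℕ := ∑ z ∈ Mf, r z • z.2 with hdl
  have hWCC : (wvec, dl) ∈ CC Fv cc := by
    have heq : (wvec, dl) = ∑ z ∈ Mf, r z • z := by
      refine Prod.ext ?_ ?_
      · show wvec = (∑ z ∈ Mf, r z • z).1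
        rw [hwvec, Prod.fst_sum]
        apply Finset.sum_congr rfl
        intro z hz
        rw [Prod.smul_fst]
      · show dl = (∑ z ∈ Mf, r z • z).2
        rw [hdl, Prod.snd_sum]
        apply Finset.sum_congr rfl
        intro z hz
        rw [Prod.smul_snd]
    rw [heq]
    exact AddSubmonoid.sum_mem _ (fun z hz => AddSubmonoid.nsmul_mem _ (hMfCC z hz) _)
  -- degree bookkeeping
  have hsplit2 : ℓ * (∑ z ∈ Mf, q z) + dl = k * s := by
    rw [← hc2, hdl, Finset.mul_sum, ← Finset.sum_add_distrib]
    apply Finset.sum_congr rfl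
    intro z hz
    rw [hcount z]
    have := hDzmul z hz
    simp only [smul_eq_mul]
    calc ℓ * q z + r z * z.2 = q z * (Dz z * z.2) + r z * z.2 := by rw [this]; ring
    _ = (q z * Dz z + r z) * z.2 := by ring
  have hdlle : dl ≤ Mf.card * (ℓ - 1) := by
    rw [hdl]
    calc ∑ z ∈ Mf, r z • z.2 ≤ ∑ z ∈ Mf, (ℓ - 1) := by
          apply Finset.sum_le_sum
          intro z hz
          have h1 : r z < Dz z := Nat.mod_lt _ (hDzpos z hz)
          have h2 := hDzmul z hz
          have h3 := hMfpos z hz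
          have : r z • z.2 ≤ (Dz z - 1) * z.2 := by
            simp only [smul_eq_mul]
            exact Nat.mul_le_mul_right _ (by omega)
          have h4 : (Dz z - 1) * z.2 = ℓ - z.2 := by
            rw [Nat.sub_mul, h2]; omega
          omega
    _ = Mf.card * (ℓ - 1) := by rw [Finset.sum_const, smul_eq_mul]
  have hdvddl : ℓ ∣ dl := by
    have : dl = ℓ * (h * s) - ℓ * (∑ z ∈ Mf, q z) := by
      rw [← Nat.mul_assoc, ← hk]; omega
    rw [this]
    exact Nat.dvd_sub (Dvd.intro _ rfl) (Dvd.intro _ rfl)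
  obtain ⟨d, hd⟩ := hdvddl
  have hdh : d + 1 ≤ h := by
    have h1 : dl < h * ℓ := by
      have : Mf.card * (ℓ - 1) < h * ℓ := by
        rw [hh]
        have : Mf.card * (ℓ - 1) ≤ Mf.card * ℓ := Nat.mul_le_mul_left _ (by omega)
        have h2 : (Mf.card + 1) * ℓ = Mf.card * ℓ + ℓ := by ring
        omega
      omega
    by_contra hcon
    have : h ≤ d := by omega
    have : h * ℓ ≤ d * ℓ := Nat.mul_le_mul_right _ this
    rw [hd] at h1
    have : ℓ * d = d * ℓ := Nat.mul_comm _ _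
    omega
  have hQ : ∑ z ∈ Mf, q z = h * s - d := by
    have h1 : ℓ * (∑ z ∈ Mf, q z) + ℓ * d = ℓ * (h * s) := by
      rw [← Nat.mul_assoc, ← hk]; omega
    have h2 : ∑ z ∈ Mf, q z + d = h * s := by
      have := Nat.eq_of_mul_eq_mul_left (show 0 < ℓ by omega)
        (show ℓ * ((∑ z ∈ Mf, q z) + d) = ℓ * (h * s) by rw [Nat.mul_add]; omega)
      exact this
    omega
  -- the blocks
  set B : Multiset (Fin n →₀ ℕ) := Mf.val.bind (fun z => Multiset.replicate (q z) (Dz z • z.1))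
    with hB
  have hBcard : Multiset.card B = h * s - d := by
    rw [hB, Multiset.card_bind, ← hQ]
    simp only [Function.comp, Multiset.card_replicate]
    rfl
  have hBsum : B.sum = ∑ z ∈ Mf, (q z * Dz z) • z.1 := by
    rw [hB, Multiset.sum_bind]
    apply Finset.sum_congr rfl
    intro z hz
    rw [Multiset.sum_replicate, smul_smul]
  have hBmem : ∀ v ∈ B, (v, ℓ) ∈ CC Fv cc := by
    intro v hv
    rw [hB, Multiset.mem_bind] at hv
    obtain ⟨z, hz, hv⟩ := hv
    have hzMf : z ∈ Mf := hz
    rw [Multiset.eq_of_mem_replicate hv]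
    have h1 : (Dz z) • z ∈ CC Fv cc := AddSubmonoid.nsmul_mem _ (hMfCC z hzMf) _
    have h2 : (Dz z) • z = (Dz z • z.1, ℓ) := by
      refine Prod.ext rfl ?_
      show (Dz z • z).2 = ℓ
      rw [Prod.smul_snd, smul_eq_mul, hDzmul z hzMf]
    rwa [h2] at h1
  obtain ⟨out, ho1, ho2, ho3⟩ := SPLIT s hs wvec d B.toList hdh (hd ▸ hWCC)
    (fun v hv => hBmem v (Multiset.mem_toList.mp hv))
    (by rw [Multiset.length_toList, hBcard])
  refine ⟨out, ho1, ho2, ?_⟩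
  rw [ho3, Multiset.sum_toList, hBsum, hwvec, ← Finset.sum_add_distrib]
  calc (∑ z ∈ Mf, (r z • z.1 + (q z * Dz z) • z.1)) = ∑ z ∈ Mf, ms.count z • z.1 := by
        apply Finset.sum_congr rfl
        intro z hz
        rw [← add_smul, hcount z]
        ring_nf
  _ ≤ a := hc1


section Polynomials

open MvPolynomial

variable {K : Type*} [Field K]

/-- the ideal of polynomials all of whose monomials have `F`-weight at least `t` -/
noncomputable def wIdeal (F : Finset (Fin n)) (t : ℕ) : Ideal (MvPolynomial (Fin n) K) where
  carrier := {f | ∀ a ∈ f.support, t ≤ w F a}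
  zero_mem' := by simp
  add_mem' := by
    intro f g hf hg a ha
    classical
    rcases Finset.mem_union.mp (MvPolynomial.support_add ha) with h | h
    · exact hf a h
    · exact hg a h
  smul_mem' := by
    intro c f hf a ha
    classical
    rw [smul_eq_mul] at ha
    have h2 := MvPolynomial.support_mul c f ha
    rw [Finset.mem_add] at h2
    obtain ⟨b1, hb1, b2, hb2, rfl⟩ := h2
    have := hf b2 hb2
    rw [w_add]
    omega

lemma mem_wIdeal {F : Finset (Fin n)} {t : ℕ} {f : MvPolynomial (Fin n) K} :
    f ∈ wIdeal F t ↔ ∀ a ∈ f.support, t ≤ w F a := Iff.rfl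

lemma wIdeal_zero (F : Finset (Fin n)) : (wIdeal F 0 : Ideal (MvPolynomial (Fin n) K)) = ⊤ := by
  rw [eq_top_iff]
  intro f _ a _
  exact Nat.zero_le _

lemma monomial_mem_wIdeal {F : Finset (Fin n)} {t : ℕ} {a : Fin n →₀ ℕ} {c : K} (hc : c ≠ 0) :
    (monomial a c) ∈ wIdeal F t ↔ t ≤ w F a := by
  classical
  rw [mem_wIdeal, support_monomial, if_neg hc]
  simp

lemma wIdeal_mul_le {F : Finset (Fin n)} {t₁ t₂ : ℕ} :
    (wIdeal F t₁ : Ideal (MvPolynomial (Fin n) K)) * wIdeal F t₂ ≤ wIdeal F (t₁ + t₂) := by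
  rw [Ideal.mul_le]
  intro f hf g hg a ha
  classical
  have h2 := MvPolynomial.support_mul f g ha
  rw [Finset.mem_add] at h2
  obtain ⟨b1, hb1, b2, hb2, rfl⟩ := h2
  have := hf b1 hb1
  have := hg b2 hb2
  rw [w_add]
  omega

lemma pow_le_wIdeal {I : Ideal (MvPolynomial (Fin n) K)} {F : Finset (Fin n)} {t : ℕ}
    (h : I ≤ wIdeal F t) : ∀ s, 1 ≤ s → I ^ s ≤ wIdeal F (t * s) := by
  intro s hs
  induction s, hs using Nat.le_induction with
  | base => rw [pow_one, Nat.mul_one]; exact h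
  | succ s hs ih =>
    rw [pow_succ, Nat.mul_succ]
    calc I ^ s * I ≤ wIdeal F (t * s) * wIdeal F t := Ideal.mul_mono ih h
    _ ≤ wIdeal F (t * s + t) := wIdeal_mul_le

/-- grading homomorphism recording the `F`-weight in an auxiliary polynomial variable -/
noncomputable def phi (F : Finset (Fin n)) :
    MvPolynomial (Fin n) K →+* Polynomial (MvPolynomial (Fin n) K) :=
  MvPolynomial.eval₂Hom
    ((Polynomial.C : MvPolynomial (Fin n) K →+* Polynomial (MvPolynomial (Fin n) K)).comp
      (MvPolynomial.C : K →+* MvPolynomial (Fin n) K))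
    (fun j => Polynomial.C (MvPolynomial.X j) * Polynomial.X ^ (if j ∈ F then 1 else 0))

lemma w_eq_sum_support (F : Finset (Fin n)) (a : Fin n →₀ ℕ) :
    ∑ j ∈ a.support, (if j ∈ F then 1 else 0) * a j = w F a := by
  classical
  have L : ∑ j ∈ a.support, (if j ∈ F then 1 else 0) * a j
      = ∑ j : Fin n, (if j ∈ F then 1 else 0) * a j :=
    Finset.sum_subset (Finset.subset_univ _)
      (fun j _ hj => by rw [Finsupp.notMem_support_iff.mp hj, Nat.mul_zero])
  have h1 : ∀ j : Fin n, (if j ∈ F then 1 else 0) * a j = (if j ∈ F then a j else 0) := by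
    intro j
    split_ifs <;> simp
  rw [L, Finset.sum_congr rfl (fun j _ => h1 j), Finset.sum_ite_mem, Finset.univ_inter, w]

lemma phi_monomial (F : Finset (Fin n)) (a : Fin n →₀ ℕ) (c : K) :
    phi F (monomial a c) = Polynomial.C (monomial a c) * Polynomial.X ^ (w F a) := by
  classical
  rw [phi, eval₂Hom_monomial]
  have hprod : (a.prod fun j e =>
      (Polynomial.C (MvPolynomial.X j : MvPolynomial (Fin n) K) *
        Polynomial.X ^ (if j ∈ F then 1 else 0)) ^ e)
      = Polynomial.C (a.prod fun j e => (MvPolynomial.X j : MvPolynomial (Fin n) K) ^ e) *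
        Polynomial.X ^ (w F a) := by
    rw [Finsupp.prod, Finsupp.prod]
    calc (∏ j ∈ a.support,
          (Polynomial.C (MvPolynomial.X j : MvPolynomial (Fin n) K) *
            Polynomial.X ^ (if j ∈ F then 1 else 0)) ^ a j)
        = ∏ j ∈ a.support, (Polynomial.C ((MvPolynomial.X j : MvPolynomial (Fin n) K) ^ a j) *
            Polynomial.X ^ ((if j ∈ F then 1 else 0) * a j)) := by
          apply Finset.prod_congr rfl
          intro j _
          rw [mul_pow, ← pow_mul, map_pow]
      _ = Polynomial.C (∏ j ∈ a.support, (MvPolynomial.X j : MvPolynomial (Fin n) K) ^ a j) *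
            Polynomial.X ^ (∑ j ∈ a.support, (if j ∈ F then 1 else 0) * a j) := by
          rw [Finset.prod_mul_distrib, map_prod, Finset.prod_pow_eq_pow_sum]
      _ = _ := by rw [w_eq_sum_support]
  rw [hprod, RingHom.comp_apply, ← mul_assoc, ← map_mul, ← MvPolynomial.monomial_eq]

lemma phi_coeff (F : Finset (Fin n)) (f : MvPolynomial (Fin n) K) (d : ℕ) (a₀ : Fin n →₀ ℕ) :
    ((phi F f).coeff d).coeff a₀ = if w F a₀ = d then f.coeff a₀ else 0 := by
  classical
  induction f using MvPolynomial.induction_on' with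
  | monomial a c =>
    rw [phi_monomial, Polynomial.coeff_C_mul, Polynomial.coeff_X_pow]
    rw [mul_ite, mul_one, mul_zero]
    by_cases hac : a = a₀
    · subst hac
      rw [MvPolynomial.coeff_monomial, if_pos rfl]
      by_cases hda : d = w F a
      · rw [if_pos hda, MvPolynomial.coeff_monomial, if_pos rfl, if_pos hda.symm]
      · rw [if_neg hda, if_neg (fun hh => hda hh.symm)]
        simp
    · have hcz : (MvPolynomial.monomial a c).coeff a₀ = 0 := by
        rw [MvPolynomial.coeff_monomial, if_neg hac]
      rw [hcz]
      split_ifs <;> simp [MvPolynomial.coeff_monomial, hac]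
  | add p q hp hq =>
    rw [map_add, Polynomial.coeff_add, MvPolynomial.coeff_add, MvPolynomial.coeff_add, hp, hq]
    split_ifs <;> simp

lemma phi_coeff_ne_zero_iff {F : Finset (Fin n)} {f : MvPolynomial (Fin n) K} {d : ℕ} :
    (phi F f).coeff d ≠ 0 ↔ ∃ a ∈ f.support, w F a = d := by
  constructor
  · intro hne
    obtain ⟨a₀, ha₀⟩ := MvPolynomial.ne_zero_iff.mp hne
    rw [phi_coeff] at ha₀
    by_cases hw : w F a₀ = d
    · rw [if_pos hw] at ha₀
      exact ⟨a₀, MvPolynomial.mem_support_iff.mpr ha₀, hw⟩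
    · rw [if_neg hw] at ha₀
      exact absurd rfl ha₀
  · rintro ⟨a, ha, hw⟩
    intro h0
    have := phi_coeff F f d a
    rw [h0, if_pos hw] at this
    exact MvPolynomial.mem_support_iff.mp ha this.symm

lemma mem_wIdeal_iff_phi {F : Finset (Fin n)} {t : ℕ} {f : MvPolynomial (Fin n) K} :
    f ∈ wIdeal F t ↔ ∀ d, d < t → (phi F f).coeff d = 0 := by
  constructor
  · intro hf d hd
    by_contra h0
    obtain ⟨a, ha, hw⟩ := phi_coeff_ne_zero_iff.mp h0
    have := hf a ha
    omega
  · intro hcoeff a ha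
    by_contra hlt
    push_neg at hlt
    exact phi_coeff_ne_zero_iff.mpr ⟨a, ha, rfl⟩ (hcoeff _ hlt)

lemma wIdeal_primary {F : Finset (Fin n)} {t : ℕ} {f u : MvPolynomial (Fin n) K}
    (hfu : f * u ∈ wIdeal F t) (hu : u ∉ wIdeal F 1) : f ∈ wIdeal F t := by
  classical
  by_contra hf
  have hf0 : f ≠ 0 := fun h => hf (h ▸ (wIdeal F t).zero_mem)
  have hsupp : f.support.Nonempty := MvPolynomial.support_nonempty.mpr hf0
  set E := f.support.image (w F) with hE
  have hEne : E.Nonempty := hsupp.image _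
  set d₀ := E.min' hEne with hd₀
  obtain ⟨a₁, ha₁, hwa₁⟩ := Finset.mem_image.mp (E.min'_mem hEne)
  have hmin : ∀ a ∈ f.support, d₀ ≤ w F a := fun a ha =>
    E.min'_le _ (Finset.mem_image_of_mem _ ha)
  have hd₀t : d₀ < t := by
    rw [mem_wIdeal] at hf
    push_neg at hf
    obtain ⟨a, ha, hwa⟩ := hf
    have := hmin a ha
    omega
  have hne₁ : (phi F f).coeff d₀ ≠ 0 := phi_coeff_ne_zero_iff.mpr ⟨a₁, ha₁, hwa₁⟩
  have hne₂ : (phi F u).coeff 0 ≠ 0 := by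
    rw [mem_wIdeal] at hu
    push_neg at hu
    obtain ⟨b, hb, hwb⟩ := hu
    exact phi_coeff_ne_zero_iff.mpr ⟨b, hb, by omega⟩
  have hmulcoeff : (phi F (f * u)).coeff d₀ = (phi F f).coeff d₀ * (phi F u).coeff 0 := by
    rw [map_mul, Polynomial.coeff_mul]
    apply Finset.sum_eq_single (d₀, 0)
    · rintro ⟨x1, x2⟩ hx hne
      rw [Finset.HasAntidiagonal.mem_antidiagonal] at hx
      simp only at hx ⊢
      rcases Nat.lt_or_ge x1 d₀ with hlt | hge
      · have : (phi F f).coeff x1 = 0 := by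
          by_contra hcon
          obtain ⟨a, ha, hwa⟩ := phi_coeff_ne_zero_iff.mp hcon
          have := hmin a ha
          omega
        rw [this, zero_mul]
      · have hx1 : x1 = d₀ := by omega
        have hx2 : x2 = 0 := by omega
        exact absurd (Prod.ext hx1 hx2) hne
    · intro hcon
      rw [Finset.HasAntidiagonal.mem_antidiagonal] at hcon
      simp at hcon
  have : (phi F (f * u)).coeff d₀ = 0 := mem_wIdeal_iff_phi.mp hfu d₀ hd₀t
  rw [hmulcoeff] at this
  rcases mul_eq_zero.mp this with h | h
  · exact hne₁ h
  · exact hne₂ h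

lemma wIdeal_one_prime (F : Finset (Fin n)) :
    (wIdeal F 1 : Ideal (MvPolynomial (Fin n) K)).IsPrime := by
  constructor
  · rw [Ideal.ne_top_iff_one]
    intro hmem
    have h0 : (0 : Fin n →₀ ℕ) ∈ (1 : MvPolynomial (Fin n) K).support := by
      rw [MvPolynomial.mem_support_iff]
      simp
    have := hmem 0 h0
    simp [w] at this
  · intro f g hfg
    by_contra hcon
    push_neg at hcon
    obtain ⟨hf, hg⟩ := hcon
    have hne₁ : (phi F f).coeff 0 ≠ 0 := by
      rw [mem_wIdeal] at hf
      push_neg at hf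
      obtain ⟨a, ha, hwa⟩ := hf
      exact phi_coeff_ne_zero_iff.mpr ⟨a, ha, by omega⟩
    have hne₂ : (phi F g).coeff 0 ≠ 0 := by
      rw [mem_wIdeal] at hg
      push_neg at hg
      obtain ⟨b, hb, hwb⟩ := hg
      exact phi_coeff_ne_zero_iff.mpr ⟨b, hb, by omega⟩
    have hprod : (phi F (f * g)).coeff 0 ≠ 0 := by
      rw [map_mul, Polynomial.mul_coeff_zero]
      exact mul_ne_zero hne₁ hne₂
    obtain ⟨a, ha, hwa⟩ := phi_coeff_ne_zero_iff.mp hprod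
    have := hfg a ha
    omega

lemma span_X_eq_wIdeal (F : Finset (Fin n)) :
    Ideal.span ((X : Fin n → MvPolynomial (Fin n) K) '' (F : Set (Fin n))) = wIdeal F 1 := by
  classical
  apply le_antisymm
  · rw [Ideal.span_le]
    rintro _ ⟨j, hj, rfl⟩
    rw [SetLike.mem_coe, mem_wIdeal]
    intro a ha
    rw [MvPolynomial.support_X] at ha
    rw [Finset.mem_singleton] at ha
    subst ha
    rw [w]
    have : ∑ q ∈ F, (Finsupp.single j 1 : Fin n →₀ ℕ) q
        = ∑ q ∈ F, if j = q then 1 else 0 := by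
      apply Finset.sum_congr rfl
      intro q _
      rw [Finsupp.single_apply]
    rw [this, Finset.sum_ite_eq F j (fun _ => 1), if_pos (Finset.mem_coe.mp hj)]
  · intro f hf
    rw [mem_wIdeal] at hf
    rw [MvPolynomial.as_sum f]
    apply Ideal.sum_mem
    intro a ha
    have h1 : 1 ≤ w F a := hf a ha
    have : ∃ j ∈ F, 1 ≤ a j := by
      by_contra hcon
      push_neg at hcon
      have : w F a = 0 := Finset.sum_eq_zero (fun j hj => by have := hcon j hj; omega)
      omega
    obtain ⟨j, hj, haj⟩ := this
    have heq : monomial a (f.coeff a)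
        = monomial (a - Finsupp.single j 1) (f.coeff a) * X j := by
      rw [MvPolynomial.X, MvPolynomial.monomial_mul, mul_one,
        tsub_add_cancel_of_le (Finsupp.single_le_iff.mpr haj)]
    rw [heq]
    exact Ideal.mul_mem_left _ _ (Ideal.subset_span ⟨j, hj, rfl⟩)

lemma mul_monomial_mem_wIdeal_iff {F : Finset (Fin n)} {t : ℕ} {b : Fin n →₀ ℕ}
    {f : MvPolynomial (Fin n) K} :
    f * monomial b 1 ∈ wIdeal F t ↔ f ∈ wIdeal F (t - w F b) := by
  classical
  constructor
  · intro hmem a ha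
    have hco : (f * monomial b 1).coeff (a + b) = f.coeff a := by
      rw [MvPolynomial.coeff_mul_monomial, mul_one]
    have hab : (a + b) ∈ (f * monomial b 1).support := by
      rw [MvPolynomial.mem_support_iff, hco]
      exact MvPolynomial.mem_support_iff.mp ha
    have := hmem _ hab
    rw [w_add] at this
    omega
  · intro hmem
    rw [MvPolynomial.as_sum f, Finset.sum_mul]
    apply Ideal.sum_mem
    intro a ha
    rw [MvPolynomial.monomial_mul, mul_one]
    rw [mem_wIdeal]
    intro x hx
    rw [MvPolynomial.support_monomial] at hx
    split_ifs at hx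
    · exact absurd hx (Finset.notMem_empty x)
    · rw [Finset.mem_singleton] at hx
      subst hx
      have := hmem a ha
      rw [w_add]
      omega

end Polynomials


lemma w_single {F : Finset (Fin n)} {j : Fin n} (hj : j ∈ F) (t : ℕ) :
    w F (Finsupp.single j t) = t := by
  classical
  rw [w]
  have : ∑ q ∈ F, (Finsupp.single j t : Fin n →₀ ℕ) q = ∑ q ∈ F, if j = q then t else 0 := by
    apply Finset.sum_congr rfl
    intro q _
    rw [Finsupp.single_apply]
  rw [this, Finset.sum_ite_eq F j (fun _ => t), if_pos hj]

section MainSection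

open MvPolynomial

variable {K : Type*} [Field K]

/-- recursively defined exponents -/
def cfun : ℕ → ℕ
  | 0 => 1
  | (d+1) => (d+1) * cfun d + 1

lemma cfun_pos (d : ℕ) : 1 ≤ cfun d := by
  cases d with
  | zero => simp [cfun]
  | succ e => simp [cfun]

lemma cfun_pred {d : ℕ} (hd : 1 ≤ d) : cfun d = d * cfun (d - 1) + 1 := by
  cases d with
  | zero => omega
  | succ e => simp [cfun]

lemma cfun_mono : Monotone cfun := by
  apply monotone_nat_of_le_succ
  intro d
  have h1 : cfun d ≤ (d+1) * cfun d := Nat.le_mul_of_pos_left _ (by omega)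
  show cfun d ≤ (d+1) * cfun d + 1
  omega

theorem main_result (n m : ℕ) (P : Fin m → Ideal (MvPolynomial (Fin n) K))
    (hP : ∀ i, ∃ F : Set (Fin n), F.Nonempty ∧
      P i = Ideal.span ((X : Fin n → MvPolynomial (Fin n) K) '' F)) :
    ∃ I : Ideal (MvPolynomial (Fin n) K),
      (∃ A : Set (Fin n →₀ ℕ),
        I = Ideal.span ((fun a => (monomial a (1 : K) : MvPolynomial (Fin n) K)) '' A)) ∧
      ∃ s₀ : ℕ, ∀ s ≥ s₀,
        associatedPrimes (MvPolynomial (Fin n) K) (MvPolynomial (Fin n) K ⧸ I ^ s) =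
          Set.range P := by
  classical
  set Fs : Fin m → Set (Fin n) := fun i => (hP i).choose with hFs
  have hFsne : ∀ i, (Fs i).Nonempty := fun i => (hP i).choose_spec.1
  have hPeq : ∀ i, P i = Ideal.span ((X : Fin n → MvPolynomial (Fin n) K) '' (Fs i)) :=
    fun i => (hP i).choose_spec.2
  set Fv : Fin m → Finset (Fin n) := fun i => (Fs i).toFinset with hFv
  have hFvco : ∀ i, ((Fv i : Finset (Fin n)) : Set (Fin n)) = Fs i := fun i => Set.coe_toFinset _
  have hFvne : ∀ i, (Fv i).Nonempty := fun i => by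
    rw [← Finset.coe_nonempty, hFvco]; exact hFsne i
  set cc : Fin m → ℕ := fun i => cfun ((Fv i).card) with hcc
  obtain ⟨k, hk1, hdecomp⟩ := main_decomp Fv cc
  have hPi_w : ∀ i, P i = wIdeal (Fv i) 1 := by
    intro i
    rw [hPeq i, ← hFvco i, span_X_eq_wIdeal]
  set I : Ideal (MvPolynomial (Fin n) K) :=
    Ideal.span ((fun a => (monomial a (1 : K) : MvPolynomial (Fin n) K)) ''
      {a | (a, k) ∈ CC Fv cc}) with hI
  refine ⟨I, ⟨{a | (a, k) ∈ CC Fv cc}, rfl⟩, 1, ?_⟩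
  intro s hs
  have hT1 : 1 ≤ k * s := Nat.one_le_iff_ne_zero.mpr (by positivity)
  -- membership description of I^s
  have hIle : ∀ i : Fin m, I ≤ wIdeal (Fv i) (cc i * k) := by
    intro i
    rw [hI, Ideal.span_le]
    rintro _ ⟨a, ha, rfl⟩
    rw [SetLike.mem_coe, monomial_mem_wIdeal one_ne_zero]
    exact ha i
  have hIpow_le : ∀ i, I ^ s ≤ wIdeal (Fv i) (cc i * (k * s)) := by
    intro i
    have := pow_le_wIdeal (hIle i) s hs
    rwa [Nat.mul_assoc] at this
  have hmono_pow : ∀ a : Fin n →₀ ℕ, (a, k * s) ∈ CC Fv cc → (monomial a (1:K)) ∈ I ^ s := by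
    intro a haCC
    obtain ⟨L, hL1, hL2, hL3⟩ := hdecomp s hs a haCC
    have hprodmem : ∀ L' : List (Fin n →₀ ℕ), (∀ b ∈ L', (b, k) ∈ CC Fv cc) →
        (monomial (L'.sum) (1:K)) ∈ I ^ (L'.length) := by
      intro L'
      induction L' with
      | nil =>
        intro _
        simp only [List.sum_nil, List.length_nil, pow_zero, Ideal.one_eq_top]
        exact Submodule.mem_top
      | cons b t ih =>
        intro hmem
        have h1 : (monomial b (1:K)) ∈ I :=
          Ideal.subset_span ⟨b, hmem b List.mem_cons_self, rfl⟩
        have h2 := ih (fun v hv => hmem v (List.mem_cons_of_mem _ hv))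
        have heq : (monomial (b + t.sum) (1:K))
            = monomial b (1:K) * monomial t.sum (1:K) := by
          rw [MvPolynomial.monomial_mul, one_mul]
        rw [List.sum_cons, List.length_cons, pow_succ', heq]
        exact Ideal.mul_mem_mul h1 h2
    have hinner := hprodmem L hL2
    rw [hL1] at hinner
    have heq : monomial a (1:K) = monomial (a - L.sum) (1:K) * monomial L.sum (1:K) := by
      rw [MvPolynomial.monomial_mul, one_mul, tsub_add_cancel_of_le hL3]
    rw [heq]
    exact Ideal.mul_mem_left _ _ hinner
  have hIs_mem : ∀ f : MvPolynomial (Fin n) K,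
      f ∈ I ^ s ↔ ∀ i, f ∈ wIdeal (Fv i) (cc i * (k * s)) := by
    intro f
    constructor
    · intro hf i
      exact hIpow_le i hf
    · intro hall
      rw [MvPolynomial.as_sum f]
      apply Ideal.sum_mem
      intro a ha
      have haCC : (a, k*s) ∈ CC Fv cc := fun i => hall i a ha
      have hmem := hmono_pow a haCC
      have heq : monomial a (f.coeff a) = C (f.coeff a) * monomial a (1:K) := by
        rw [C_mul_monomial, mul_one]
      rw [heq]
      exact Ideal.mul_mem_left _ _ hmem
  -- the set equality
  ext Pr
  rw [AssociatedPrimes.mem_iff, isAssociatedPrime_iff]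
  constructor
  · rintro ⟨hprime, x, hx⟩
    obtain ⟨u, rfl⟩ := Ideal.Quotient.mk_surjective x
    have hsmul : ∀ r : MvPolynomial (Fin n) K,
        r • (Ideal.Quotient.mk (I^s) u) = Ideal.Quotient.mk (I^s) (r * u) :=
      fun r => rfl
    have hmemPr : ∀ r, r ∈ Pr ↔ r * u ∈ I ^ s := by
      intro r
      rw [hx, Submodule.mem_colon_singleton, Submodule.mem_bot, hsmul,
        Ideal.Quotient.eq_zero_iff_mem]
    set A : Fin m → Ideal (MvPolynomial (Fin n) K) := fun i =>
      Submodule.colon (wIdeal (Fv i) (cc i * (k*s)))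
        ({u} : Set (MvPolynomial (Fin n) K)) with hA
    have hAmem : ∀ i r, r ∈ A i ↔ r * u ∈ wIdeal (Fv i) (cc i * (k*s)) := by
      intro i r
      rw [hA]
      rw [Submodule.mem_colon_singleton, smul_eq_mul]
    have hPr_iff : ∀ r, r ∈ Pr ↔ ∀ i, r ∈ A i := by
      intro r
      rw [hmemPr r, hIs_mem]
      exact ⟨fun h i => (hAmem i r).mpr (h i), fun h i => (hAmem i r).mp (h i)⟩
    have hprodle : ∏ i : Fin m, A i ≤ Pr := by
      intro r hr
      have h1 : r ∈ Finset.univ.inf A := Ideal.prod_le_inf hr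
      rw [hPr_iff]
      intro i
      exact (Finset.inf_le (Finset.mem_univ i) : Finset.univ.inf A ≤ A i) h1
    obtain ⟨i₀, -, hi₀⟩ := (Ideal.IsPrime.prod_le hprime).mp hprodle
    have hPrA : Pr = A i₀ := le_antisymm (fun r hr => (hPr_iff r).mp hr i₀) hi₀
    have hu_not : u ∉ wIdeal (Fv i₀) (cc i₀ * (k*s)) := by
      intro hu
      apply hprime.ne_top
      rw [eq_top_iff]
      intro r _
      rw [hPrA, hAmem]
      exact Ideal.mul_mem_left _ _ hu
    have hle1 : Pr ≤ wIdeal (Fv i₀) 1 := by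
      intro r hr
      have hru : r * u ∈ wIdeal (Fv i₀) (cc i₀*(k*s)) := (hAmem i₀ r).mp (hPrA ▸ hr)
      by_contra hrnot
      rw [mul_comm r u] at hru
      exact hu_not (wIdeal_primary hru hrnot)
    have hge1 : wIdeal (Fv i₀) 1 ≤ Pr := by
      rw [← span_X_eq_wIdeal, Ideal.span_le]
      rintro _ ⟨j, hj, rfl⟩
      have hjF : j ∈ Fv i₀ := hj
      have hXpow : (X j : MvPolynomial (Fin n) K) ^ (cc i₀ * (k*s))
          ∈ wIdeal (Fv i₀) (cc i₀*(k*s)) := by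
        rw [X_pow_eq_monomial, monomial_mem_wIdeal one_ne_zero, w_single hjF]
      have hXP : (X j : MvPolynomial (Fin n) K)^(cc i₀*(k*s)) ∈ Pr := by
        rw [hPrA, hAmem]
        exact Ideal.mul_mem_right _ _ hXpow
      have hpos : cc i₀ * (k * s) ≠ 0 := by
        have := cfun_pos ((Fv i₀).card)
        positivity
      exact hprime.mem_of_pow_mem _ hXP
    rw [Set.mem_range]
    exact ⟨i₀, by rw [hPi_w i₀, le_antisymm hle1 hge1]⟩
  · rintro ⟨i, rfl⟩
    -- construct a witness monomial
    set T : ℕ := k * s with hT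
    set p : Fin n := (hFvne i).choose with hp
    have hpF : p ∈ Fv i := (hFvne i).choose_spec
    set d : ℕ := (Fv i).card with hd
    have hd1 : 1 ≤ d := Finset.card_pos.mpr (hFvne i)
    set c' : ℕ := cfun (d - 1) with hc'
    set H : ℕ := (Finset.univ.sup cc) * T with hH
    set afun : Fin n → ℕ := fun q =>
      if q ∈ Fv i then (if q = p then c' * T + (T - 1) else c' * T) else H with hafun
    set a : Fin n →₀ ℕ := Finsupp.equivFunOnFinite.symm afun with ha
    have haq : ∀ q, a q = afun q := fun q => rfl
    have hcfd : cfun d = d * c' + 1 := by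
      rw [hc']
      exact cfun_pred hd1
    -- the key weight computations
    have hwi : w (Fv i) a = cc i * T - 1 := by
      rw [w, ← Finset.add_sum_erase _ _ hpF]
      have h1 : a p = c' * T + (T - 1) := by rw [haq, hafun]; simp [hpF]
      have h2 : ∀ q ∈ (Fv i).erase p, a q = c' * T := by
        intro q hq
        obtain ⟨hqp, hqF⟩ := Finset.mem_erase.mp hq
        rw [haq, hafun]
        simp [hqF, hqp]
      rw [h1, Finset.sum_congr rfl h2, Finset.sum_const, Finset.card_erase_of_mem hpF]
      rw [smul_eq_mul]
      simp only [← hd]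
      have hcci : cc i = d * c' + 1 := by
        have h0 : cc i = cfun ((Fv i).card) := rfl
        rw [h0, ← hd]
        exact hcfd
      rw [hcci]
      have hTpos : 1 ≤ T := hT1
      have hmulassoc : d * c' * T = d * (c' * T) := Nat.mul_assoc d c' T
      have hsub1 : (d - 1) * (c' * T) = d * (c' * T) - (c' * T) := Nat.sub_one_mul d (c' * T)
      have hle : c' * T ≤ d * (c' * T) := Nat.le_mul_of_pos_left _ (by omega)
      have hexpand : (d * c' + 1) * T = d * c' * T + T := by ring
      omega
    have hw_sub : ∀ j, Fv j ⊆ Fv i → Fv j ≠ Fv i → cc j * T ≤ w (Fv j) a := by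
      intro j hsub hne
      have hss : Fv j ⊂ Fv i := Finset.ssubset_iff_subset_ne.mpr ⟨hsub, hne⟩
      have hcard : (Fv j).card ≤ d - 1 := by
        have := Finset.card_lt_card hss
        omega
      have hpercoord : ∀ q ∈ Fv j, c' * T ≤ a q := by
        intro q hq
        have hqFi : q ∈ Fv i := hsub hq
        simp only [haq, hafun, hqFi, if_true]
        split_ifs <;> omega
      have hsum : (Fv j).card • (c' * T) ≤ ∑ q ∈ Fv j, a q :=
        Finset.card_nsmul_le_sum _ _ _ hpercoord
      have hccj : cc j ≤ c' := by
        rw [hcc, hc']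
        exact cfun_mono hcard
      have hcardpos : 1 ≤ (Fv j).card := Finset.card_pos.mpr (hFvne j)
      have h1 : cc j * T ≤ c' * T := Nat.mul_le_mul_right _ hccj
      have h2 : c' * T ≤ (Fv j).card * (c' * T) := Nat.le_mul_of_pos_left _ (by omega)
      rw [smul_eq_mul] at hsum
      rw [w]
      omega
    have hw_not : ∀ j, ¬ (Fv j ⊆ Fv i) → cc j * T ≤ w (Fv j) a := by
      intro j hnsub
      obtain ⟨q, hqj, hqni⟩ := Finset.not_subset.mp hnsub
      have haqH : a q = H := by
        simp only [haq, hafun, if_neg hqni]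
      have h1 : H ≤ w (Fv j) a := by
        rw [w, ← haqH]
        exact Finset.single_le_sum (fun _ _ => Nat.zero_le _) hqj
      have h2 : cc j * T ≤ H := by
        rw [hH]
        exact Nat.mul_le_mul_right _ (Finset.le_sup (Finset.mem_univ j))
      omega
    have hccipos : 1 ≤ cc i * T := by
      have := cfun_pos ((Fv i).card)
      have : 1 ≤ cc i := this
      exact Nat.one_le_iff_ne_zero.mpr (by positivity)
    have hexp : ∀ j, (Fv j = Fv i ∧ cc j * T - w (Fv j) a = 1) ∨
        (cc j * T - w (Fv j) a = 0) := by
      intro j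
      by_cases hsub : Fv j ⊆ Fv i
      · by_cases heq : Fv j = Fv i
        · left
          refine ⟨heq, ?_⟩
          have hccji : cc j = cc i := by
            show cfun ((Fv j).card) = cfun ((Fv i).card)
            rw [heq]
          rw [heq, hwi, hccji]
          omega
        · right
          have := hw_sub j hsub heq
          omega
      · right
        have := hw_not j hsub
        omega
    have hexpi : cc i * T - w (Fv i) a = 1 := by
      rw [hwi]
      omega
    -- now prove the associated-prime property
    rw [hPi_w i]
    refine ⟨wIdeal_one_prime (Fv i), Ideal.Quotient.mk (I^s) (monomial a (1:K)), ?_⟩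
    ext r
    rw [Submodule.mem_colon_singleton, Submodule.mem_bot]
    have hsmul : r • (Ideal.Quotient.mk (I^s) (monomial a (1:K)))
        = Ideal.Quotient.mk (I^s) (r * monomial a (1:K)) := rfl
    rw [hsmul, Ideal.Quotient.eq_zero_iff_mem, hIs_mem]
    constructor
    · intro hr j
      rw [mul_monomial_mem_wIdeal_iff]
      rcases hexp j with ⟨hFji, hone⟩ | hzero
      · rw [hone, hFji]
        exact hr
      · rw [hzero, wIdeal_zero]
        exact Submodule.mem_top
    · intro hr
      have hri := hr i
      rw [mul_monomial_mem_wIdeal_iff] at hri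
      rwa [hexpi] at hri

end MainSection

end Stmt3Aux


/-- Any finite collection of nonzero monomial prime ideals is the stable set of
associated prime ideals `Ass^∞(I)` of some monomial ideal `I`. -/
theorem stmt3 {K : Type*} [Field K] (n m : ℕ)
    (P : Fin m → Ideal (MvPolynomial (Fin n) K))
    (hP : ∀ i, IsNonzeroMonomialPrime (P i)) :
    ∃ I : Ideal (MvPolynomial (Fin n) K), IsMonomialIdeal I ∧
      ∃ s₀ : ℕ, ∀ s ≥ s₀,
        associatedPrimes (MvPolynomial (Fin n) K) (MvPolynomial (Fin n) K ⧸ I ^ s) =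
          Set.range P := by
  exact Stmt3Aux.main_result n m P hP
end

section
/- Let K be a field, S = K[x_1, ..., x_n] the polynomial ring, and let P_1, ..., P_m ⊂ S be an arbitrary finite collection of nonzero monomial prime ideals. Then there exists a monomial ideal I ⊆ S such that the set of associated primes of S/I^s equals {P_1, ..., P_m} for every s ≥ 1; in particular Ass(I) = Ass^∞(I) = {P_1, ..., P_m}. -/
open MvPolynomial

namespace Stmt4Aux

variable {K : Type*} [Field K] {n : ℕ}

/-- Sum of exponents of `v` over the variable set `G`. -/
def dG (G : Finset (Fin n)) (v : Fin n →₀ ℕ) : ℕ := ∑ t ∈ G, v t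

lemma dG_add (G : Finset (Fin n)) (v w : Fin n →₀ ℕ) :
    dG G (v + w) = dG G v + dG G w := by
  simp [dG, Finset.sum_add_distrib]

lemma dG_zero (G : Finset (Fin n)) : dG G (0 : Fin n →₀ ℕ) = 0 := by simp [dG]

lemma dG_mono {G : Finset (Fin n)} {v w : Fin n →₀ ℕ} (h : v ≤ w) :
    dG G v ≤ dG G w :=
  Finset.sum_le_sum fun t _ => h t

lemma dG_single {G : Finset (Fin n)} {t : Fin n} (ht : t ∈ G) (a : ℕ) :
    dG G (Finsupp.single t a) = a := by
  classical
  rw [dG, Finset.sum_eq_single t]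
  · simp
  · intro b _ hb; simp [Finsupp.single_apply_eq_zero, Ne.symm hb]
  · exact fun h => absurd ht h

/-- The monomial ideal of all monomials of `G`-degree at least `c`. -/
noncomputable def MI (K : Type*) [Field K] {n : ℕ} (G : Finset (Fin n)) (c : ℕ) :
    Ideal (MvPolynomial (Fin n) K) :=
  Ideal.span ((fun a => (monomial a (1 : K) : MvPolynomial (Fin n) K)) ''
    {v | c ≤ dG G v})

lemma mem_MI {G : Finset (Fin n)} {c : ℕ} {f : MvPolynomial (Fin n) K} :
    f ∈ MI K G c ↔ ∀ v ∈ f.support, c ≤ dG G v := by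
  rw [MI, mem_ideal_span_monomial_image]
  constructor
  · intro h v hv
    obtain ⟨u, hu, huv⟩ := h v hv
    exact le_trans hu (dG_mono huv)
  · intro h v hv
    exact ⟨v, h v hv, le_rfl⟩

lemma monomial_mem_MI {G : Finset (Fin n)} {c : ℕ} {v : Fin n →₀ ℕ} {a : K}
    (h : c ≤ dG G v) : monomial v a ∈ MI K G c := by
  rw [mem_MI]
  intro w hw
  classical
  rw [support_monomial] at hw
  rcases em (a = 0) with ha | ha
  · simp [ha] at hw
  · simp [ha] at hw; subst hw; exact h

lemma MI_zero (G : Finset (Fin n)) : MI K G 0 = ⊤ := by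
  rw [Ideal.eq_top_iff_one, mem_MI]
  intro v _; exact Nat.zero_le _

lemma MI_antitone {G : Finset (Fin n)} {c c' : ℕ} (h : c ≤ c') :
    MI K G c' ≤ MI K G c := by
  intro f hf
  rw [mem_MI] at hf ⊢
  exact fun v hv => le_trans h (hf v hv)

/-- The key comparison map: first compare `G`-degrees, then lexicographically. -/
def psi (G : Finset (Fin n)) (v : Fin n →₀ ℕ) : ℕ ×ₗ Lex (Fin n →₀ ℕ) :=
  toLex (dG G v, toLex v)

lemma psi_inj {G : Finset (Fin n)} : Function.Injective (psi (n := n) G) := by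
  intro a b h
  have := congrArg (fun p => (ofLex p).2) h
  simpa [psi] using congrArg ofLex this

lemma psi_fst_le {G : Finset (Fin n)} {v w : Fin n →₀ ℕ} (h : psi G v ≤ psi G w) :
    dG G v ≤ dG G w := by
  rw [psi, psi, Prod.Lex.le_iff] at h
  rcases h with h | ⟨h, _⟩
  · exact le_of_lt h
  · exact le_of_eq h

lemma psi_add_lt {G : Finset (Fin n)} {a a' b b' : Fin n →₀ ℕ}
    (h1 : psi G a ≤ psi G a') (h2 : psi G b ≤ psi G b')
    (hne : ¬(a = a' ∧ b = b')) : psi G (a + b) < psi G (a' + b') := by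
  rw [psi, psi, Prod.Lex.le_iff] at h1 h2
  simp only [ofLex_toLex] at h1 h2
  rw [psi, psi, Prod.Lex.lt_iff]
  simp only [ofLex_toLex]
  simp only [dG_add]
  rcases h1 with h1 | ⟨e1, l1⟩
  · left
    exact Nat.add_lt_add_of_lt_of_le h1 (by
      rcases h2 with h2 | ⟨e2, _⟩; exact le_of_lt h2; exact le_of_eq e2)
  · rcases h2 with h2 | ⟨e2, l2⟩
    · left; exact Nat.add_lt_add_of_le_of_lt (le_of_eq e1) h2
    · right
      refine ⟨by rw [e1, e2], ?_⟩
      have hne' : toLex a ≠ toLex a' ∨ toLex b ≠ toLex b' := by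
        by_contra hc
        push_neg at hc
        exact hne ⟨toLex.injective hc.1, toLex.injective hc.2⟩
      have : (toLex (a + b) : Lex (Fin n →₀ ℕ)) = toLex a + toLex b := rfl
      have h' : (toLex (a' + b') : Lex (Fin n →₀ ℕ)) = toLex a' + toLex b' := rfl
      rw [this, h']
      rcases hne' with hh | hh
      · exact add_lt_add_of_lt_of_le (lt_of_le_of_ne l1 hh) l2
      · exact add_lt_add_of_le_of_lt l1 (lt_of_le_of_ne l2 hh)



lemma not_mem_MI_iff {G : Finset (Fin n)} {c : ℕ} {f : MvPolynomial (Fin n) K} :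
    f ∉ MI K G c ↔ ∃ v ∈ f.support, dG G v < c := by
  rw [mem_MI]; push_neg; rfl

lemma mul_not_mem_MI {G : Finset (Fin n)} {c : ℕ} {x y : MvPolynomial (Fin n) K}
    (hx : x ∉ MI K G c) (hy : y ∉ MI K G 1) :
    x * y ∉ MI K G c := by
  classical
  obtain ⟨vx, hvx, hdx⟩ := not_mem_MI_iff.mp hx
  obtain ⟨vy, hvy, hdy⟩ := not_mem_MI_iff.mp hy
  have hxs : x.support.Nonempty := ⟨vx, hvx⟩
  have hys : y.support.Nonempty := ⟨vy, hvy⟩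
  obtain ⟨v0, hv0, hv0min⟩ := Finset.exists_min_image x.support (psi G) hxs
  obtain ⟨u0, hu0, hu0min⟩ := Finset.exists_min_image y.support (psi G) hys
  have hd0 : dG G v0 < c := lt_of_le_of_lt (psi_fst_le (hv0min vx hvx)) hdx
  have hu0d : dG G u0 < 1 := lt_of_le_of_lt (psi_fst_le (hu0min vy hvy)) hdy
  rw [not_mem_MI_iff]
  refine ⟨v0 + u0, ?_, ?_⟩
  · rw [MvPolynomial.mem_support_iff, MvPolynomial.coeff_mul]
    rw [Finset.sum_eq_single_of_mem (v0, u0) (Finset.HasAntidiagonal.mem_antidiagonal.mpr rfl)]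
    · exact mul_ne_zero (MvPolynomial.mem_support_iff.mp hv0)
        (MvPolynomial.mem_support_iff.mp hu0)
    · rintro ⟨a, b⟩ hab hne
      by_contra hcon
      have ha : a ∈ x.support := by
        rw [MvPolynomial.mem_support_iff]; intro h0; apply hcon; rw [h0, zero_mul]
      have hb : b ∈ y.support := by
        rw [MvPolynomial.mem_support_iff]; intro h0; apply hcon; rw [h0, mul_zero]
      have hlt : psi G (v0 + u0) < psi G (a + b) := by
        refine psi_add_lt (hv0min a ha) (hu0min b hb) ?_
        rintro ⟨rfl, rfl⟩
        exact hne rfl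
      rw [Finset.HasAntidiagonal.mem_antidiagonal.mp hab] at hlt
      exact lt_irrefl _ hlt
  · calc dG G (v0 + u0) = dG G v0 + dG G u0 := dG_add _ _ _
    _ < c := by omega

lemma MI_mul_le {G : Finset (Fin n)} (a b : ℕ) :
    MI (n := n) K G a * MI K G b ≤ MI K G (a + b) := by
  classical
  rw [Ideal.mul_le]
  intro f hf g hg
  rw [mem_MI] at hf hg ⊢
  intro v hv
  have := MvPolynomial.support_mul f g hv
  rw [Finset.mem_add] at this
  obtain ⟨p, hp, q, hq, rfl⟩ := this
  rw [dG_add]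
  exact Nat.add_le_add (hf p hp) (hg q hq)

lemma MI_pow (G : Finset (Fin n)) (c : ℕ) :
    (MI (n := n) K G 1) ^ c = MI K G c := by
  classical
  induction c with
  | zero => rw [pow_zero, Ideal.one_eq_top, MI_zero]
  | succ c ih =>
    apply le_antisymm
    · rw [pow_succ]
      calc (MI (n := n) K G 1) ^ c * MI K G 1 = MI K G c * MI K G 1 := by rw [ih]
        _ ≤ MI K G (c + 1) := MI_mul_le c 1
    · rw [MI]
      rw [Ideal.span_le]
      rintro _ ⟨v, hv, rfl⟩
      simp only [Set.mem_setOf_eq] at hv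
      have hpos : 0 < dG G v := by omega
      have : ∃ t ∈ G, v t ≠ 0 := by
        by_contra hcon
        push_neg at hcon
        have : dG G v = 0 := Finset.sum_eq_zero hcon
        omega
      obtain ⟨t, htG, htv⟩ := this
      have hle : Finsupp.single t 1 ≤ v := by
        rw [Finsupp.single_le_iff]; omega
      have hsplit : Finsupp.single t 1 + (v - Finsupp.single t 1) = v :=
        add_tsub_cancel_of_le hle
      have hdrest : c ≤ dG G (v - Finsupp.single t 1) := by
        have := dG_add G (Finsupp.single t 1) (v - Finsupp.single t 1)
        rw [hsplit] at this
        rw [dG_single htG] at this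
        omega
      have heq : (monomial v (1 : K)) =
          (monomial (Finsupp.single t 1) (1 : K)) *
            (monomial (v - Finsupp.single t 1) (1 : K)) := by
        rw [MvPolynomial.monomial_mul, hsplit, one_mul]
      show (monomial v (1 : K)) ∈ MI K G 1 ^ (c + 1)
      rw [heq, pow_succ, mul_comm ((MI (n := n) K G 1) ^ c) (MI K G 1)]
      exact Ideal.mul_mem_mul
        (monomial_mem_MI (by rw [dG_single htG]))
        (by rw [ih]; exact monomial_mem_MI hdrest)

lemma MI_ne_top {G : Finset (Fin n)} {c : ℕ} (hc : 1 ≤ c) :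
    MI (n := n) K G c ≠ ⊤ := by
  intro h
  have h1 : (1 : MvPolynomial (Fin n) K) ∈ MI K G c := h ▸ Submodule.mem_top
  rw [mem_MI] at h1
  have h0 : (0 : Fin n →₀ ℕ) ∈ (1 : MvPolynomial (Fin n) K).support := by
    rw [MvPolynomial.mem_support_iff]
    simp
  have := h1 0 h0
  simp [dG] at this
  omega

lemma MI_one_isPrime (G : Finset (Fin n)) : (MI (n := n) K G 1).IsPrime := by
  rw [Ideal.isPrime_iff]
  refine ⟨MI_ne_top le_rfl, ?_⟩
  intro x y hxy
  by_contra hcon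
  push_neg at hcon
  exact mul_not_mem_MI hcon.1 hcon.2 hxy

lemma MI_radical {G : Finset (Fin n)} {c : ℕ} (hc : 1 ≤ c) :
    (MI (n := n) K G c).radical = MI K G 1 := by
  rw [← MI_pow G c]
  exact (Ideal.radical_pow (MI K G 1) (n := c) (by omega)).trans (MI_one_isPrime (K := K) G).radical

lemma MI_isPrimary {G : Finset (Fin n)} {c : ℕ} (hc : 1 ≤ c) :
    (MI (n := n) K G c).IsPrimary := by
  rw [Ideal.isPrimary_iff]
  refine ⟨MI_ne_top hc, ?_⟩
  intro x y hxy
  by_contra hcon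
  push_neg at hcon
  rw [MI_radical hc] at hcon
  exact mul_not_mem_MI hcon.1 hcon.2 hxy

lemma mul_monomial_mem_MI {G : Finset (Fin n)} {θ : ℕ} {u : Fin n →₀ ℕ}
    {f : MvPolynomial (Fin n) K} :
    f * monomial u (1 : K) ∈ MI K G θ ↔ f ∈ MI K G (θ - dG G u) := by
  classical
  constructor
  · intro h
    rw [mem_MI] at h ⊢
    intro v hv
    have hcoeff : MvPolynomial.coeff (v + u) (f * monomial u (1 : K)) =
        MvPolynomial.coeff v f * 1 := MvPolynomial.coeff_mul_monomial _ _ _ _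
    have hmem : v + u ∈ (f * monomial u (1 : K)).support := by
      rw [MvPolynomial.mem_support_iff, hcoeff, mul_one]
      exact MvPolynomial.mem_support_iff.mp hv
    have := h _ hmem
    rw [dG_add] at this
    omega
  · intro h
    rw [mem_MI] at h ⊢
    intro v hv
    have := MvPolynomial.support_mul f (monomial u (1 : K)) hv
    rw [Finset.mem_add] at this
    obtain ⟨p, hp, q, hq, rfl⟩ := this
    have hq' : q = u := by
      rw [MvPolynomial.support_monomial] at hq
      simpa [one_ne_zero] using hq
    subst hq'
    have := h p hp
    rw [dG_add]
    omega


lemma dG_le_tot (G : Finset (Fin n)) (v : Fin n →₀ ℕ) :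
    dG G v ≤ dG Finset.univ v :=
  Finset.sum_le_sum_of_subset (Finset.subset_univ G)

lemma tot_eq_dG {G : Finset (Fin n)} {v : Fin n →₀ ℕ} (h : ∀ t, t ∉ G → v t = 0) :
    dG Finset.univ v = dG G v :=
  (Finset.sum_subset (Finset.subset_univ G) (fun t _ ht => h t ht)).symm

lemma dG_tsub {G : Finset (Fin n)} {q r : Fin n →₀ ℕ} (h : q ≤ r) :
    dG G (r - q) = dG G r - dG G q := by
  have hsplit : q + (r - q) = r := add_tsub_cancel_of_le h
  have := dG_add G q (r - q)
  rw [hsplit] at this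
  omega

/-- `v` satisfies all constraints of `L` at level `s`. -/
def sat (L : List (Finset (Fin n) × ℕ)) (s : ℕ) (v : Fin n →₀ ℕ) : Prop :=
  ∀ p ∈ L, p.2 * s ≤ dG p.1 v

/-- Head weight dominates the sum of the tail weights, recursively. -/
def Dom : List (Finset (Fin n) × ℕ) → Prop
  | [] => True
  | p :: T => ((T.map Prod.snd).sum ≤ p.2) ∧ Dom T

/-- Pick a sub-vector of `w` supported in `G` with prescribed `G`-degree. -/
lemma exists_pick (G : Finset (Fin n)) (w : Fin n →₀ ℕ) (c : ℕ) (hc : c ≤ dG G w) :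
    ∃ p : Fin n →₀ ℕ, p ≤ w ∧ (∀ t, t ∉ G → p t = 0) ∧ dG G p = c := by
  induction c with
  | zero => exact ⟨0, zero_le, fun t _ => rfl, by simp [dG]⟩
  | succ c ih =>
    obtain ⟨p, hpw, hsupp, hdeg⟩ := ih (by omega)
    have : ∃ t ∈ G, p t < w t := by
      by_contra hcon
      push_neg at hcon
      have : dG G w ≤ dG G p := Finset.sum_le_sum fun t ht => hcon t ht
      omega
    obtain ⟨t, htG, htlt⟩ := this
    refine ⟨p + Finsupp.single t 1, ?_, ?_, ?_⟩
    · rw [Finsupp.le_def]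
      intro t'
      rcases em (t' = t) with rfl | hne
      · simp; omega
      · have : ¬ t = t' := fun h => hne h.symm
        simp only [Finsupp.add_apply, Finsupp.single_apply, if_neg this, add_zero]
        exact Finsupp.le_def.mp hpw t'
    · intro t' ht'
      have hne2 : ¬ t = t' := fun h => ht' (h ▸ htG)
      simp only [Finsupp.add_apply, Finsupp.single_apply, if_neg hne2, add_zero, hsupp t' ht']
    · rw [dG_add, hdeg]
      have : dG G (Finsupp.single t 1) = 1 := by
        rw [dG, Finset.sum_eq_single t]
        · simp
        · intro b _ hb; simp [Finsupp.single_apply_eq_zero, Ne.symm hb]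
        · exact fun h => absurd htG h
      omega

/-- A small "core" of `w` witnessing all constraints of `L` at level 1,
with total degree bounded by the sum of the weights. -/
lemma exists_core (L : List (Finset (Fin n) × ℕ)) (w : Fin n →₀ ℕ) (h : sat L 1 w) :
    ∃ u : Fin n →₀ ℕ, u ≤ w ∧ sat L 1 u ∧ dG Finset.univ u ≤ (L.map Prod.snd).sum := by
  induction L with
  | nil => exact ⟨0, zero_le, fun p hp => absurd hp (List.not_mem_nil), by simp [dG]⟩
  | cons p T ih =>
    obtain ⟨u', hu'w, hu'sat, hu'tot⟩ := ih (fun q hq => h q (List.mem_cons_of_mem p hq))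
    have hp : p.2 * 1 ≤ dG p.1 w := h p (List.mem_cons_self)
    obtain ⟨q, hqw, hqsupp, hqdeg⟩ := exists_pick p.1 w p.2 (by omega)
    refine ⟨u' ⊔ q, sup_le hu'w hqw, ?_, ?_⟩
    · intro r hr
      rcases List.mem_cons.mp hr with rfl | hr
      · calc r.2 * 1 = dG r.1 q := by omega
          _ ≤ dG r.1 (u' ⊔ q) := dG_mono le_sup_right
      · exact le_trans (hu'sat r hr) (dG_mono le_sup_left)
    · have hle : u' ⊔ q ≤ u' + q := sup_le le_self_add le_add_self
      calc dG Finset.univ (u' ⊔ q) ≤ dG Finset.univ (u' + q) := dG_mono hle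
        _ = dG Finset.univ u' + dG Finset.univ q := dG_add _ _ _
        _ ≤ (T.map Prod.snd).sum + p.2 := by
            have : dG Finset.univ q = p.2 := by rw [tot_eq_dG hqsupp, hqdeg]
            omega
        _ = ((p :: T).map Prod.snd).sum := by simp [add_comm]

/-- Split `r` into `s` pieces with prescribed minimal `G`-degrees. -/
lemma exists_split (G : Finset (Fin n)) :
    ∀ (s : ℕ) (need : Fin s → ℕ) (r : Fin n →₀ ℕ),
      (∑ j, need j) ≤ dG G r →
      ∃ q : Fin s → (Fin n →₀ ℕ), (∑ j, q j) ≤ r ∧ ∀ j, need j ≤ dG G (q j) := by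
  intro s
  induction s with
  | zero => intro need r _; exact ⟨fun _ => 0, by simp, fun j => Fin.elim0 j⟩
  | succ s ih =>
    intro need r hr
    rw [Fin.sum_univ_succ] at hr
    obtain ⟨q0, hq0r, _, hq0deg⟩ := exists_pick G r (need 0) (by omega)
    have hrest : (∑ j : Fin s, need (Fin.succ j)) ≤ dG G (r - q0) := by
      rw [dG_tsub hq0r, hq0deg]
      omega
    obtain ⟨q', hq'le, hq'deg⟩ := ih (fun j => need (Fin.succ j)) (r - q0) hrest
    refine ⟨Fin.cons q0 q', ?_, ?_⟩
    · rw [Fin.sum_univ_succ]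
      simp only [Fin.cons_zero, Fin.cons_succ]
      calc q0 + ∑ j, q' j ≤ q0 + (r - q0) := by
            exact add_le_add le_rfl hq'le
        _ = r := add_tsub_cancel_of_le hq0r
    · intro j
      induction j using Fin.cases with
      | zero => simpa using le_of_eq hq0deg.symm
      | succ i => simpa using hq'deg i

/-- The main combinatorial decomposition lemma. -/
lemma dG_sum (G : Finset (Fin n)) {ι : Type*} (t : Finset ι) (f : ι → (Fin n →₀ ℕ)) :
    dG G (∑ j ∈ t, f j) = ∑ j ∈ t, dG G (f j) := by
  classical
  induction t using Finset.induction_on with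
  | empty => simp [dG]
  | insert _ _ hx ih =>
    rw [Finset.sum_insert hx, dG_add, ih, Finset.sum_insert hx]

lemma MCL : ∀ (L : List (Finset (Fin n) × ℕ)), Dom L →
    ∀ (s : ℕ), 1 ≤ s → ∀ (v : Fin n →₀ ℕ), sat L s v →
    ∃ w : Fin s → (Fin n →₀ ℕ), (∑ j, w j) = v ∧ ∀ j, sat L 1 (w j) := by
  intro L
  induction L with
  | nil =>
    intro _ s hs v _
    have hspos : 0 < s := hs
    refine ⟨fun j => if j = ⟨0, hspos⟩ then v else 0, ?_, ?_⟩
    · rw [Finset.sum_ite_eq' Finset.univ (⟨0, hspos⟩ : Fin s) (fun _ => v)] 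
      simp
    · intro j p hp; exact absurd hp (List.not_mem_nil)
  | cons p T ih =>
    intro hdom s hs v hv
    obtain ⟨w, hwsum, hwsat⟩ := ih hdom.2 s hs v (fun q hq => hv q (List.mem_cons_of_mem p hq))
    -- cores
    have hcore : ∀ j, ∃ u : Fin n →₀ ℕ, u ≤ w j ∧ sat T 1 u ∧
        dG Finset.univ u ≤ (T.map Prod.snd).sum :=
      fun j => exists_core T (w j) (hwsat j)
    choose u huw husat hutot using hcore
    have husum : (∑ j, u j) ≤ v := hwsum ▸ Finset.sum_le_sum fun j _ => huw j
    set r := v - ∑ j, u j with hr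
    have hudeg : ∀ j, dG p.1 (u j) ≤ p.2 := fun j =>
      le_trans (le_trans (dG_le_tot _ _) (hutot j)) hdom.1
    have hrdeg : (∑ j, (p.2 - dG p.1 (u j))) ≤ dG p.1 r := by
      have h1 : dG p.1 r = dG p.1 v - dG p.1 (∑ j, u j) := dG_tsub husum
      have h2 : dG p.1 (∑ j, u j) = ∑ j, dG p.1 (u j) := dG_sum _ _ _
      have h3 : (∑ j, (p.2 - dG p.1 (u j))) + (∑ j, dG p.1 (u j)) = s * p.2 := by
        rw [← Finset.sum_add_distrib]
        have : ∀ j ∈ (Finset.univ : Finset (Fin s)),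
            (p.2 - dG p.1 (u j)) + dG p.1 (u j) = p.2 := by
          intro j _; have := hudeg j; omega
        rw [Finset.sum_congr rfl this, Finset.sum_const, Finset.card_univ,
          Fintype.card_fin, smul_eq_mul]
      have h4 : p.2 * s ≤ dG p.1 v := hv p (List.mem_cons_self)
      have h5 : (∑ j, dG p.1 (u j)) ≤ dG p.1 v := by
        rw [← h2]; exact dG_mono husum
      have h6 := Nat.mul_comm p.2 s
      omega
    obtain ⟨q, hqr, hqdeg⟩ := exists_split p.1 s (fun j => p.2 - dG p.1 (u j)) r hrdeg
    set e := r - ∑ j, q j with he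
    have hspos : 0 < s := hs
    set j0 : Fin s := ⟨0, hspos⟩ with hj0
    refine ⟨fun j => u j + q j + (if j = j0 then e else 0), ?_, ?_⟩
    · rw [Finset.sum_add_distrib, Finset.sum_add_distrib]
      rw [Finset.sum_ite_eq' Finset.univ j0 (fun _ => e)]
      simp only [Finset.mem_univ, if_true]
      have h1 : (∑ j, q j) + e = r := add_tsub_cancel_of_le hqr
      have h2 : (∑ j, u j) + r = v := add_tsub_cancel_of_le husum
      calc (∑ j, u j) + (∑ j, q j) + e = (∑ j, u j) + ((∑ j, q j) + e) := add_assoc _ _ _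
        _ = v := by rw [h1, h2]
    · intro j q' hq'
      rcases List.mem_cons.mp hq' with rfl | hq'
      · have : q'.2 ≤ dG q'.1 (u j) + dG q'.1 (q j) := by
          have := hqdeg j
          have := hudeg j
          omega
        calc q'.2 * 1 = q'.2 := by omega
          _ ≤ dG q'.1 (u j) + dG q'.1 (q j) := this
          _ = dG q'.1 (u j + q j) := (dG_add _ _ _).symm
          _ ≤ dG q'.1 (u j + q j + (if j = j0 then e else 0)) := dG_mono le_self_add
      · calc q'.2 * 1 ≤ dG q'.1 (u j) := husat j q' hq'
          _ ≤ dG q'.1 (u j + q j + (if j = j0 then e else 0)) := by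
              refine dG_mono (le_trans le_self_add le_self_add)


/-- `sat` is upward closed. -/
lemma sat_mono {L : List (Finset (Fin n) × ℕ)} {s : ℕ} {v w : Fin n →₀ ℕ}
    (h : sat L s v) (hvw : v ≤ w) : sat L s w :=
  fun p hp => le_trans (h p hp) (dG_mono hvw)

lemma sat_add {L : List (Finset (Fin n) × ℕ)} {a b : ℕ} {v w : Fin n →₀ ℕ}
    (ha : sat L a v) (hb : sat L b w) : sat L (a + b) (v + w) := by
  intro p hp
  rw [dG_add, Nat.mul_add]
  exact Nat.add_le_add (ha p hp) (hb p hp)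

/-- The monomial ideal attached to the constraint list `L` at level `s`. -/
noncomputable def IL (K : Type*) [Field K] {n : ℕ} (L : List (Finset (Fin n) × ℕ)) (s : ℕ) :
    Ideal (MvPolynomial (Fin n) K) :=
  Ideal.span ((fun a => (monomial a (1 : K) : MvPolynomial (Fin n) K)) ''
    {v | sat L s v})

lemma mem_IL {L : List (Finset (Fin n) × ℕ)} {s : ℕ} {f : MvPolynomial (Fin n) K} :
    f ∈ IL K L s ↔ ∀ v ∈ f.support, sat L s v := by
  rw [IL, mem_ideal_span_monomial_image]
  constructor
  · intro h v hv
    obtain ⟨u, hu, huv⟩ := h v hv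
    exact sat_mono hu huv
  · intro h v hv
    exact ⟨v, h v hv, le_rfl⟩

lemma monomial_mem_IL {L : List (Finset (Fin n) × ℕ)} {s : ℕ} {v : Fin n →₀ ℕ}
    (h : sat L s v) : monomial v (1 : K) ∈ IL K L s := by
  rw [mem_IL]
  intro w hw
  classical
  rw [support_monomial, if_neg (one_ne_zero' K)] at hw
  rcases Finset.mem_singleton.mp hw with rfl
  exact h

lemma mem_IL_iff_forall {L : List (Finset (Fin n) × ℕ)} {s : ℕ}
    {f : MvPolynomial (Fin n) K} :
    f ∈ IL K L s ↔ ∀ q ∈ L, f ∈ MI K q.1 (q.2 * s) := by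
  rw [mem_IL]
  constructor
  · intro h q hq
    rw [mem_MI]
    exact fun v hv => h v hv q hq
  · intro h v hv q hq
    exact mem_MI.mp (h q hq) v hv

lemma IL_nil (s : ℕ) : IL (n := n) K [] s = ⊤ := by
  rw [Ideal.eq_top_iff_one, mem_IL]
  intro v _ p hp
  exact absurd hp (List.not_mem_nil)

lemma IL_cons {p : Finset (Fin n) × ℕ} {T : List (Finset (Fin n) × ℕ)} {s : ℕ} :
    IL K (p :: T) s = MI K p.1 (p.2 * s) ⊓ IL K T s := by
  ext f
  rw [Submodule.mem_inf, mem_IL_iff_forall, mem_IL_iff_forall]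
  constructor
  · intro h
    exact ⟨h p (List.mem_cons_self), fun q hq => h q (List.mem_cons_of_mem p hq)⟩
  · rintro ⟨h1, h2⟩ q hq
    rcases List.mem_cons.mp hq with rfl | hq
    · exact h1
    · exact h2 q hq

lemma IL_mul_le {L : List (Finset (Fin n) × ℕ)} (a b : ℕ) :
    IL (n := n) K L a * IL K L b ≤ IL K L (a + b) := by
  classical
  rw [Ideal.mul_le]
  intro f hf g hg
  rw [mem_IL] at hf hg ⊢
  intro v hv
  have := MvPolynomial.support_mul f g hv
  rw [Finset.mem_add] at this
  obtain ⟨p, hp, q, hq, rfl⟩ := this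
  exact sat_add (hf p hp) (hg q hq)

lemma prod_monomial {ι : Type*} (t : Finset ι) (w : ι → (Fin n →₀ ℕ)) :
    (∏ j ∈ t, (monomial (w j) (1 : K) : MvPolynomial (Fin n) K)) =
      monomial (∑ j ∈ t, w j) (1 : K) := by
  classical
  induction t using Finset.induction_on with
  | empty => simp
  | insert _ _ hx ih =>
    rw [Finset.prod_insert hx, ih, MvPolynomial.monomial_mul, one_mul,
      Finset.sum_insert hx]

lemma IL_pow {L : List (Finset (Fin n) × ℕ)} (hdom : Dom L) {s : ℕ} (hs : 1 ≤ s) :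
    (IL (n := n) K L 1) ^ s = IL K L s := by
  apply le_antisymm
  · clear hdom
    induction s with
    | zero => omega
    | succ s ih =>
      rcases Nat.eq_or_lt_of_le hs with h1 | h1
      · rw [← h1, pow_one]
      · have hs' : 1 ≤ s := by omega
        calc (IL (n := n) K L 1) ^ (s + 1) = (IL K L 1) ^ s * IL K L 1 := pow_succ _ _
          _ ≤ IL K L s * IL K L 1 := Ideal.mul_mono_left (ih hs')
          _ ≤ IL K L (s + 1) := IL_mul_le s 1
  · rw [IL]
    rw [Ideal.span_le]
    rintro _ ⟨v, hv, rfl⟩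
    simp only [Set.mem_setOf_eq] at hv
    obtain ⟨w, hwsum, hwsat⟩ := MCL L hdom s hs v hv
    have heq : (monomial v (1 : K) : MvPolynomial (Fin n) K) =
        ∏ j : Fin s, monomial (w j) (1 : K) := by
      rw [prod_monomial, hwsum]
    show (monomial v (1 : K) : MvPolynomial (Fin n) K) ∈ (IL (n := n) K L 1) ^ s
    rw [heq]
    have hpow : (IL (n := n) K L 1) ^ s = ∏ _j : Fin s, IL K L 1 := by
      rw [Finset.prod_const, Finset.card_univ, Fintype.card_fin]
    rw [hpow]
    exact Ideal.prod_mem_prod fun j _ => monomial_mem_IL (by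
      intro p hp
      have := hwsat j p hp
      omega)

section Ass

variable {R : Type*} [CommRing R]

lemma isAssociatedPrime_prod {M N : Type*} [AddCommGroup M] [AddCommGroup N]
    [Module R M] [Module R N] {P : Ideal R} (h : IsAssociatedPrime P (M × N)) :
    IsAssociatedPrime P M ∨ IsAssociatedPrime P N := by
  obtain ⟨hP, z, hz⟩ := h
  have h1 : (⊥ : Submodule R (M × N)).colon {z} =
      (⊥ : Submodule R M).colon {z.1} ⊓ (⊥ : Submodule R N).colon {z.2} := by
    ext r
    simp only [Submodule.mem_colon_singleton, Submodule.mem_bot, Submodule.mem_inf]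
    constructor
    · intro h
      constructor
      · have := congrArg Prod.fst h; simpa using this
      · have := congrArg Prod.snd h; simpa using this
    · rintro ⟨ha, hb⟩
      have hzz : r • z = (r • z.1, r • z.2) := rfl
      rw [hzz, ha, hb]
      rfl
  rw [h1, Ideal.radical_inf] at hz
  have hmul : ((⊥ : Submodule R M).colon {z.1}).radical *
      ((⊥ : Submodule R N).colon {z.2}).radical ≤ P :=
    hz ▸ Ideal.mul_le_inf
  rcases hP.mul_le.mp hmul with hle | hle
  · left
    exact ⟨hP, z.1, le_antisymm (hz ▸ inf_le_left) hle⟩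
  · right
    exact ⟨hP, z.2, le_antisymm (hz ▸ inf_le_right) hle⟩

lemma ass_inf_subset (A B : Ideal R) :
    associatedPrimes R (R ⧸ (A ⊓ B)) ⊆
      associatedPrimes R (R ⧸ A) ∪ associatedPrimes R (R ⧸ B) := by
  intro P hP
  have hker : (A ⊓ B : Ideal R) ≤ LinearMap.ker ((A.mkQ).prod (B.mkQ)) := by
    rw [LinearMap.ker_prod, Submodule.ker_mkQ, Submodule.ker_mkQ]
  let f : (R ⧸ (A ⊓ B)) →ₗ[R] (R ⧸ A) × (R ⧸ B) :=
    Submodule.liftQ (A ⊓ B) ((A.mkQ).prod (B.mkQ)) hker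
  have hinj : Function.Injective f := by
    rw [← LinearMap.ker_eq_bot]
    apply Submodule.ker_liftQ_eq_bot
    rw [LinearMap.ker_prod, Submodule.ker_mkQ, Submodule.ker_mkQ]
  have h2 : IsAssociatedPrime P ((R ⧸ A) × (R ⧸ B)) :=
    IsAssociatedPrime.map_of_injective f (AssociatedPrimes.mem_iff.mp hP) hinj
  rcases isAssociatedPrime_prod h2 with h | h
  · exact Or.inl h
  · exact Or.inr h

end Ass

lemma ass_IL_subset {L : List (Finset (Fin n) × ℕ)} (hpos : ∀ p ∈ L, 1 ≤ p.2)
    {s : ℕ} (hs : 1 ≤ s) :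
    associatedPrimes (MvPolynomial (Fin n) K) (MvPolynomial (Fin n) K ⧸ (IL K L s)) ⊆
      {Q | ∃ p ∈ L, Q = MI K p.1 1} := by
  induction L with
  | nil =>
    intro Q hQ
    rw [IL_nil] at hQ
    haveI : Subsingleton
        ((MvPolynomial (Fin n) K) ⧸ (⊤ : Ideal (MvPolynomial (Fin n) K))) :=
      Submodule.Quotient.subsingleton_iff.mpr rfl
    exact absurd hQ not_isAssociatedPrime_of_subsingleton
  | cons p T ih =>
    intro Q hQ
    rw [IL_cons] at hQ
    rcases ass_inf_subset _ _ hQ with h | h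
    · have hprim : (MI K p.1 (p.2 * s)).IsPrimary :=
        MI_isPrimary (by
          have := hpos p (List.mem_cons_self)
          exact Nat.one_le_iff_ne_zero.mpr (by positivity))
      rw [associatedPrimes.eq_singleton_of_isPrimary hprim] at h
      rcases Set.mem_singleton_iff.mp h with rfl
      refine ⟨p, List.mem_cons_self, ?_⟩
      exact MI_radical (by
        have := hpos p (List.mem_cons_self)
        exact Nat.one_le_iff_ne_zero.mpr (by positivity))
    · obtain ⟨q, hq, hq2⟩ := ih (fun q hq => hpos q (List.mem_cons_of_mem p hq)) h
      exact ⟨q, List.mem_cons_of_mem p hq, hq2⟩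

lemma le_foldr_max (l : List ℕ) (x : ℕ) (hx : x ∈ l) : x ≤ l.foldr max 0 := by
  induction l with
  | nil => exact absurd hx (List.not_mem_nil)
  | cons a l ih =>
    rcases List.mem_cons.mp hx with rfl | hx
    · exact le_max_left _ _
    · exact le_trans (ih hx) (le_max_right _ _)

lemma foldr_max_cases (l : List ℕ) : l.foldr max 0 = 0 ∨ l.foldr max 0 ∈ l := by
  induction l with
  | nil => exact Or.inl rfl
  | cons a l ih =>
    rcases le_total a (l.foldr max 0) with h | h
    · rw [List.foldr_cons, max_eq_right h]
      rcases ih with h0 | hmem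
      · exact Or.inl h0
      · exact Or.inr (List.mem_cons_of_mem a hmem)
    · rw [List.foldr_cons, max_eq_left h]
      exact Or.inr (List.mem_cons_self)

lemma le_list_sum (l : List ℕ) (x : ℕ) (hx : x ∈ l) : x ≤ l.sum := by
  induction l with
  | nil => exact absurd hx (List.not_mem_nil)
  | cons a l ih =>
    rw [List.sum_cons]
    rcases List.mem_cons.mp hx with rfl | hx
    · omega
    · have := ih hx; omega

lemma ass_IL_mem {L : List (Finset (Fin n) × ℕ)}
    (hpos : ∀ p ∈ L, 1 ≤ p.2) (hnon : ∀ p ∈ L, p.1.Nonempty)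
    (hnodup : (L.map Prod.fst).Nodup)
    (hB4 : ∀ p ∈ L, ∀ q ∈ L, q.1 ⊂ p.1 → n * q.2 + 1 ≤ p.2)
    {s : ℕ} (hs : 1 ≤ s) {p : Finset (Fin n) × ℕ} (hp : p ∈ L) :
    MI K p.1 1 ∈ associatedPrimes (MvPolynomial (Fin n) K)
      (MvPolynomial (Fin n) K ⧸ (IL K L s)) := by
  classical
  set A : ℕ := ((L.filter (fun q => q.1 ⊂ p.1)).map Prod.snd).foldr max 0 with hA
  have hA1 : ∀ q ∈ L, q.1 ⊂ p.1 → q.2 ≤ A := by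
    intro q hq hsub
    apply le_foldr_max
    exact List.mem_map_of_mem (f := Prod.snd) (List.mem_filter.mpr ⟨hq, by simpa using hsub⟩)
  have hA2 : n * A + 1 ≤ p.2 := by
    rcases foldr_max_cases ((L.filter (fun q => q.1 ⊂ p.1)).map Prod.snd) with h0 | hmem
    · rw [← hA] at h0
      rw [h0]
      have := hpos p hp
      omega
    · rw [← hA] at hmem
      obtain ⟨q, hq, hq2⟩ := List.mem_map.mp hmem
      have hq' := List.mem_filter.mp hq
      have hsub : q.1 ⊂ p.1 := by simpa using hq'.2
      have := hB4 p hp q hq'.1 hsub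
      rw [← hq2]
      omega
  set Bc : ℕ := (L.map Prod.snd).sum + 1 with hBc
  have hBc1 : ∀ q ∈ L, q.2 < Bc := by
    intro q hq
    have : q.2 ≤ (L.map Prod.snd).sum :=
      le_list_sum _ _ (List.mem_map_of_mem (f := Prod.snd) hq)
    omega
  obtain ⟨t0, ht0⟩ := hnon p hp
  have hcard : p.1.card ≤ n := by
    have := Finset.card_le_univ p.1
    rwa [Fintype.card_fin] at this
  have hkey : p.1.card * (s * A) + 1 ≤ p.2 * s := by
    have e1 : p.1.card * (s * A) ≤ n * (s * A) := Nat.mul_le_mul_right _ hcard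
    have e2 : n * (s * A) = (n * A) * s := by ring
    have e3 : (n * A) * s + s ≤ p.2 * s := by
      calc (n * A) * s + s = (n * A + 1) * s := by ring
        _ ≤ p.2 * s := Nat.mul_le_mul_right _ hA2
    omega
  set R : ℕ := p.2 * s - 1 - p.1.card * (s * A) with hR
  set u : Fin n →₀ ℕ := Finsupp.equivFunOnFinite.symm
    (fun t => if t ∈ p.1 then s * A + (if t = t0 then R else 0) else s * Bc) with hu
  have huapp : ∀ t, u t = if t ∈ p.1 then s * A + (if t = t0 then R else 0) else s * Bc := by
    intro t
    rw [hu]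
    rfl
  have hdGu : dG p.1 u = p.2 * s - 1 := by
    have h0 : dG p.1 u = ∑ t ∈ p.1, (s * A + (if t = t0 then R else 0)) := by
      rw [dG]
      apply Finset.sum_congr rfl
      intro t ht
      rw [huapp t, if_pos ht]
    rw [h0, Finset.sum_add_distrib, Finset.sum_const, smul_eq_mul,
      Finset.sum_ite_eq' p.1 t0 (fun _ => R), if_pos ht0]
    omega
  have hother : ∀ q ∈ L, q ≠ p → q.2 * s ≤ dG q.1 u := by
    intro q hq hqp
    by_cases hsub : q.1 ⊆ p.1
    · have hne' : q.1 ≠ p.1 := by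
        intro h
        exact hqp (List.inj_on_of_nodup_map hnodup hq hp h)
      have hss : q.1 ⊂ p.1 := ssubset_of_subset_of_ne hsub hne'
      obtain ⟨t, ht⟩ := hnon q hq
      have h1 : u t ≤ dG q.1 u :=
        Finset.single_le_sum (fun i _ => Nat.zero_le (u i)) ht
      have h2 : s * A ≤ u t := by
        rw [huapp t, if_pos (hsub ht)]
        omega
      have h3 : q.2 ≤ A := hA1 q hq hss
      have : q.2 * s ≤ s * A := by
        calc q.2 * s = s * q.2 := by ring
          _ ≤ s * A := Nat.mul_le_mul_left _ h3
      omega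
    · obtain ⟨t, ht, htn⟩ := Finset.not_subset.mp hsub
      have h1 : u t ≤ dG q.1 u :=
        Finset.single_le_sum (fun i _ => Nat.zero_le (u i)) ht
      have h2 : u t = s * Bc := by rw [huapp t, if_neg htn]
      have h3 : q.2 < Bc := hBc1 q hq
      have : q.2 * s ≤ s * Bc := by
        calc q.2 * s = s * q.2 := by ring
          _ ≤ s * Bc := Nat.mul_le_mul_left _ (le_of_lt h3)
      omega
  have hps1 : 1 ≤ p.2 * s := Nat.one_le_iff_ne_zero.mpr (by
    have := hpos p hp
    positivity)
  -- the colon ideal computation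
  have hcolon : ∀ r : MvPolynomial (Fin n) K,
      r * monomial u (1 : K) ∈ IL K L s ↔ r ∈ MI K p.1 1 := by
    intro r
    rw [mem_IL_iff_forall]
    constructor
    · intro h
      have := (mul_monomial_mem_MI.mp (h p hp))
      have he : p.2 * s - dG p.1 u = 1 := by omega
      rwa [he] at this
    · intro hr q hq
      rw [mul_monomial_mem_MI]
      rcases em (q = p) with rfl | hqp
      · have he : q.2 * s - dG q.1 u = 1 := by omega
        rwa [he]
      · have he : q.2 * s - dG q.1 u = 0 := by
          have := hother q hq hqp
          omega
        rw [he, MI_zero]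
        exact Submodule.mem_top
  refine AssociatedPrimes.mem_iff.mpr
    ⟨MI_one_isPrime p.1, Ideal.Quotient.mk (IL K L s) (monomial u (1 : K)), ?_⟩
  suffices hC : MI K p.1 1 = (⊥ : Submodule (MvPolynomial (Fin n) K)
      (MvPolynomial (Fin n) K ⧸ IL K L s)).colon
      {Ideal.Quotient.mk (IL K L s) (monomial u (1 : K))} by
    rw [← hC, (MI_one_isPrime (K := K) p.1).radical]
  ext r
  rw [Submodule.mem_colon_singleton, Submodule.mem_bot]
  have hsm : r • (Ideal.Quotient.mk (IL K L s) (monomial u (1 : K))) =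
      Ideal.Quotient.mk (IL K L s) (r * monomial u (1 : K)) := rfl
  rw [hsm, Ideal.Quotient.eq_zero_iff_mem, hcolon r]

/-- Attach geometric weights to a list of finsets (head gets the largest weight). -/
def wtd (n : ℕ) : List (Finset (Fin n)) → List (Finset (Fin n) × ℕ)
  | [] => []
  | G :: T => (G, (n + 2) * (n + 3) ^ T.length) :: wtd n T

lemma wtd_map_fst (l : List (Finset (Fin n))) : (wtd n l).map Prod.fst = l := by
  induction l with
  | nil => rfl
  | cons G T ih => simp [wtd, ih]

lemma wtd_sum (l : List (Finset (Fin n))) :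
    ((wtd n l).map Prod.snd).sum = (n + 3) ^ l.length - 1 := by
  induction l with
  | nil => rfl
  | cons G T ih =>
    have hx : 1 ≤ (n + 3) ^ T.length := Nat.one_le_pow _ _ (by omega)
    have hp : (n + 3) ^ (T.length + 1) = (n + 3) ^ T.length * (n + 3) := pow_succ _ _
    have hr : (n + 3) ^ T.length * (n + 3) = (n + 2) * (n + 3) ^ T.length
        + (n + 3) ^ T.length := by ring
    simp only [wtd, List.map_cons, List.sum_cons, ih, List.length_cons]
    omega

lemma wtd_pos {l : List (Finset (Fin n))} : ∀ p ∈ wtd n l, 1 ≤ p.2 := by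
  induction l with
  | nil => intro p hp; exact absurd hp (List.not_mem_nil)
  | cons G T ih =>
    intro p hp
    rcases List.mem_cons.mp hp with rfl | hp
    · have : 1 ≤ (n + 3) ^ T.length := Nat.one_le_pow _ _ (by omega)
      have : 1 ≤ (n + 2) * (n + 3) ^ T.length :=
        le_trans this (Nat.le_mul_of_pos_left _ (by omega))
      exact this
    · exact ih p hp

lemma wtd_dom (l : List (Finset (Fin n))) : Dom (wtd n l) := by
  induction l with
  | nil => trivial
  | cons G T ih =>
    refine ⟨?_, ih⟩
    rw [wtd_sum]
    have hx : 1 ≤ (n + 3) ^ T.length := Nat.one_le_pow _ _ (by omega)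
    have : (n + 3) ^ T.length ≤ (n + 2) * (n + 3) ^ T.length :=
      Nat.le_mul_of_pos_left _ (by omega)
    omega

lemma wtd_wt_le {l : List (Finset (Fin n))} :
    ∀ q ∈ wtd n l, (n + 3) * q.2 ≤ (n + 2) * (n + 3) ^ l.length := by
  induction l with
  | nil => intro q hq; exact absurd hq (List.not_mem_nil)
  | cons G T ih =>
    intro q hq
    rcases List.mem_cons.mp hq with rfl | hq
    · have : (n + 3) * ((n + 2) * (n + 3) ^ T.length)
          = (n + 2) * (n + 3) ^ (T.length + 1) := by
        rw [pow_succ]; ring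
      simp only [List.length_cons]
      omega
    · have h1 := ih q hq
      have h2 : (n + 2) * (n + 3) ^ T.length ≤ (n + 2) * (n + 3) ^ (T.length + 1) :=
        Nat.mul_le_mul_left _ (Nat.pow_le_pow_right (by omega) (by omega))
      simp only [List.length_cons]
      omega

lemma wtd_B4 {l : List (Finset (Fin n))}
    (hsort : l.Pairwise (fun A B => B.card ≤ A.card)) :
    ∀ p ∈ wtd n l, ∀ q ∈ wtd n l, q.1 ⊂ p.1 → n * q.2 + 1 ≤ p.2 := by
  induction l with
  | nil => intro p hp; exact absurd hp (List.not_mem_nil)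
  | cons G T ih =>
    rcases List.pairwise_cons.mp hsort with ⟨hhead, htail⟩
    intro p hp q hq hss
    rcases List.mem_cons.mp hp with rfl | hp
    · rcases List.mem_cons.mp hq with rfl | hq
      · exact absurd hss (ssubset_irrefl _)
      · have h1 := wtd_wt_le q hq
        have h2 : 1 ≤ q.2 := wtd_pos q hq
        have h3 : (n + 3) * q.2 = n * q.2 + 3 * q.2 := by ring
        dsimp only
        omega
    · rcases List.mem_cons.mp hq with rfl | hq
      · -- q = head, p in tail : contradiction with sortedness
        have hp1 : p.1 ∈ T := by
          have : p.1 ∈ (wtd n T).map Prod.fst := List.mem_map_of_mem (f := Prod.fst) hp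
          rwa [wtd_map_fst] at this
        have hcard := hhead p.1 hp1
        have hlt := Finset.card_lt_card hss
        dsimp only at hlt
        omega
      · exact ih htail p hp q hq hss

lemma span_X_eq_MI {F : Set (Fin n)} {G : Finset (Fin n)} (hFG : ∀ t, t ∈ G ↔ t ∈ F) :
    Ideal.span ((X : Fin n → MvPolynomial (Fin n) K) '' F) = MI K G 1 := by
  apply le_antisymm
  · rw [Ideal.span_le]
    rintro _ ⟨t, htF, rfl⟩
    have hX : (X t : MvPolynomial (Fin n) K) = monomial (Finsupp.single t 1) 1 := rfl
    rw [SetLike.mem_coe, hX]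
    apply monomial_mem_MI
    rw [dG_single ((hFG t).mpr htF)]
  · rw [MI, Ideal.span_le]
    rintro _ ⟨v, hv, rfl⟩
    simp only [Set.mem_setOf_eq] at hv
    have : ∃ t ∈ G, v t ≠ 0 := by
      by_contra hcon
      push_neg at hcon
      have : dG G v = 0 := Finset.sum_eq_zero hcon
      omega
    obtain ⟨t, htG, htv⟩ := this
    have hle : Finsupp.single t 1 ≤ v := by
      rw [Finsupp.single_le_iff]; omega
    have hsplit : (v - Finsupp.single t 1) + Finsupp.single t 1 = v :=
      tsub_add_cancel_of_le hle
    have heq : (monomial v (1 : K) : MvPolynomial (Fin n) K) =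
        monomial (v - Finsupp.single t 1) (1 : K) * X t := by
      have hX : (X t : MvPolynomial (Fin n) K) = monomial (Finsupp.single t 1) 1 := rfl
      rw [hX, MvPolynomial.monomial_mul, one_mul, hsplit]
    rw [SetLike.mem_coe]
    show (monomial v (1 : K) : MvPolynomial (Fin n) K) ∈
      Ideal.span ((X : Fin n → MvPolynomial (Fin n) K) '' F)
    rw [heq]
    exact Ideal.mul_mem_left _ _ (Ideal.subset_span ⟨t, (hFG t).mp htG, rfl⟩)

end Stmt4Aux

open Stmt4Aux in
/-- For any finite collection of nonzero monomial prime ideals `P_1, ..., P_m`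
there is a monomial ideal `I` with `Ass(S/I^s) = {P_1, ..., P_m}` for every
`s ≥ 1`; in particular `Ass(I) = Ass^∞(I) = {P_1, ..., P_m}`. -/
theorem stmt4 {K : Type*} [Field K] (n m : ℕ)
    (P : Fin m → Ideal (MvPolynomial (Fin n) K))
    (hP : ∀ i, IsNonzeroMonomialPrime (P i)) :
    ∃ I : Ideal (MvPolynomial (Fin n) K), IsMonomialIdeal I ∧
      ∀ s : ℕ, 1 ≤ s →
        associatedPrimes (MvPolynomial (Fin n) K) (MvPolynomial (Fin n) K ⧸ I ^ s) =
          Set.range P := by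
  classical
  rcases Nat.eq_zero_or_pos m with rfl | hm
  · refine ⟨⊤, ⟨{0}, ?_⟩, ?_⟩
    · rw [Set.image_singleton]
      have h1 : (monomial (0 : Fin n →₀ ℕ) (1 : K) : MvPolynomial (Fin n) K) = 1 := by
        rw [MvPolynomial.monomial_zero', MvPolynomial.C_1]
      rw [h1, Ideal.span_singleton_one]
    · intro s hs
      rw [Ideal.top_pow]
      haveI : Subsingleton
          (MvPolynomial (Fin n) K ⧸ (⊤ : Ideal (MvPolynomial (Fin n) K))) :=
        Submodule.Quotient.subsingleton_iff.mpr rfl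
      rw [Set.range_eq_empty P]
      exact Set.eq_empty_iff_forall_notMem.mpr
        (fun Q hQ => not_isAssociatedPrime_of_subsingleton hQ)
  · choose F hFne hFP using hP
    set Gf : Fin m → Finset (Fin n) := fun i => (Set.toFinite (F i)).toFinset with hGf
    have hGfmem : ∀ i t, t ∈ Gf i ↔ t ∈ F i := fun i t => Set.Finite.mem_toFinset _
    have hGfne : ∀ i, (Gf i).Nonempty := by
      intro i
      obtain ⟨t, ht⟩ := hFne i
      exact ⟨t, (hGfmem i t).mpr ht⟩
    have hPMI : ∀ i, P i = MI K (Gf i) 1 := by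
      intro i
      rw [hFP i]
      exact span_X_eq_MI (hGfmem i)
    set l0 : List (Finset (Fin n)) := ((Finset.univ : Finset (Fin m)).image Gf).toList
      with hl0
    set ble : Finset (Fin n) → Finset (Fin n) → Bool :=
      fun A B => decide (B.card ≤ A.card) with hble
    set l : List (Finset (Fin n)) := l0.mergeSort ble with hl
    have hperm : List.Perm l l0 := List.mergeSort_perm l0 ble
    have hlnodup : l.Nodup := (hperm.nodup_iff).mpr (Finset.nodup_toList _)
    have hlmem : ∀ Gs : Finset (Fin n), Gs ∈ l ↔ ∃ i, Gf i = Gs := by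
      intro Gs
      rw [hperm.mem_iff, hl0, Finset.mem_toList, Finset.mem_image]
      constructor
      · rintro ⟨i, _, hi⟩; exact ⟨i, hi⟩
      · rintro ⟨i, hi⟩; exact ⟨i, Finset.mem_univ i, hi⟩
    have hsorted : l.Pairwise (fun A B => B.card ≤ A.card) := by
      have h1 : l.Pairwise (fun A B => ble A B) := by
        rw [hl]
        apply List.pairwise_mergeSort
        · intro a b c hab hbc
          rw [hble] at hab hbc ⊢
          simp only [decide_eq_true_eq] at hab hbc ⊢
          omega
        · intro a b
          rw [hble]
          simp only [Bool.or_eq_true, decide_eq_true_eq]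
          omega
      exact h1.imp (fun h => by simpa [hble] using h)
    set L : List (Finset (Fin n) × ℕ) := wtd n l with hL
    have hpos : ∀ p ∈ L, 1 ≤ p.2 := wtd_pos
    have hnon : ∀ p ∈ L, p.1.Nonempty := by
      intro p hp
      have hp1 : p.1 ∈ l := by
        have : p.1 ∈ (wtd n l).map Prod.fst := List.mem_map_of_mem (f := Prod.fst) hp
        rwa [wtd_map_fst] at this
      obtain ⟨i, hi⟩ := (hlmem p.1).mp hp1
      rw [← hi]
      exact hGfne i
    have hnodup : (L.map Prod.fst).Nodup := by
      rw [hL, wtd_map_fst]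
      exact hlnodup
    have hB4 : ∀ p ∈ L, ∀ q ∈ L, q.1 ⊂ p.1 → n * q.2 + 1 ≤ p.2 := wtd_B4 hsorted
    refine ⟨IL K L 1, ⟨{v | sat L 1 v}, rfl⟩, ?_⟩
    intro s hs
    have hpow : (IL K L 1) ^ s = IL K L s := IL_pow (wtd_dom l) hs
    rw [hpow]
    apply subset_antisymm
    · intro Q hQ
      obtain ⟨p, hpL, hQeq⟩ := ass_IL_subset hpos hs hQ
      have hp1 : p.1 ∈ l := by
        have : p.1 ∈ (wtd n l).map Prod.fst := List.mem_map_of_mem (f := Prod.fst) hpL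
        rwa [wtd_map_fst] at this
      obtain ⟨i, hi⟩ := (hlmem p.1).mp hp1
      exact ⟨i, by rw [hPMI i, hi, hQeq]⟩
    · rintro _ ⟨i, rfl⟩
      rw [hPMI i]
      have h1 : Gf i ∈ l := (hlmem _).mpr ⟨i, rfl⟩
      have h2 : Gf i ∈ (wtd n l).map Prod.fst := by
        rw [wtd_map_fst]; exact h1
      obtain ⟨p, hpL, hp1⟩ := List.mem_map.mp h2
      rw [← hp1]
      exact ass_IL_mem hpos hnon hnodup hB4 hs hpL
end

section
/- Let K be a field, S = K[x_1, ..., x_n] the polynomial ring, and let P_1, ..., P_m ⊂ S be pairwise distinct nonzero monomial prime ideals such that P_j is not contained in P_i whenever i < j. Then there exist positive integers k_1, ..., k_m such that for every positive integer t, the set of associated primes of S/(P_1^{t k_1} ∩ P_2^{t k_2} ∩ ... ∩ P_m^{t k_m}) equals {P_1, ..., P_m}. -/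
open MvPolynomial

namespace Stmt5Aux
open scoped Classical

variable {K : Type*} [Field K] {n : ℕ}

/-- weight of an exponent vector relative to a set `F` of variables -/
noncomputable def wt (F : Set (Fin n)) (d : Fin n →₀ ℕ) : ℕ :=
  ∑ i : Fin n, F.indicator d i

lemma wt_add (F : Set (Fin n)) (d e : Fin n →₀ ℕ) :
    wt F (d + e) = wt F d + wt F e := by
  classical
  simp only [wt, ← Finset.sum_add_distrib]
  refine Finset.sum_congr rfl fun i _ => ?_
  by_cases h : i ∈ F <;> simp [Set.indicator, h]

lemma wt_single (F : Set (Fin n)) (c : Fin n) (v : ℕ) :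
    wt F (Finsupp.single c v) = if c ∈ F then v else 0 := by
  classical
  rw [wt, Finset.sum_eq_single c]
  · simp [Set.indicator]
  · intro i _ hic
    by_cases h : i ∈ F <;> simp [Set.indicator, h, Finsupp.single_apply, Ne.symm hic]
  · simp
lemma wt_zero (F : Set (Fin n)) : wt F 0 = 0 := by simp [wt]

lemma exists_mem_of_wt_pos {F : Set (Fin n)} {d : Fin n →₀ ℕ} (h : 0 < wt F d) :
    ∃ i ∈ F, d i ≠ 0 := by
  classical
  by_contra hc
  push_neg at hc
  have : wt F d = 0 := by
    rw [wt]
    refine Finset.sum_eq_zero fun i _ => ?_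
    by_cases hi : i ∈ F
    · simp [Set.indicator, hi, hc i hi]
    · simp [Set.indicator, hi]
  omega

/-- the set of polynomials all of whose monomials have `F`-weight at least `k` -/
def Iw (F : Set (Fin n)) (k : ℕ) : Ideal (MvPolynomial (Fin n) K) where
  carrier := {f | ∀ d ∈ f.support, k ≤ wt F d}
  zero_mem' := by simp
  add_mem' := by
    intro a b ha hb d hd
    classical
    rcases Finset.mem_union.mp (MvPolynomial.support_add hd) with h | h
    · exact ha d h
    · exact hb d h
  smul_mem' := by
    intro c f hf d hd
    classical
    rw [smul_eq_mul] at hd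
    rcases Finset.mem_add.mp (MvPolynomial.support_mul _ _ hd) with ⟨d1, h1, d2, h2, rfl⟩
    calc k ≤ wt F d2 := hf d2 h2
    _ ≤ wt F d1 + wt F d2 := le_add_self
    _ = wt F (d1 + d2) := (wt_add F d1 d2).symm

lemma mem_Iw {F : Set (Fin n)} {k : ℕ} {f : MvPolynomial (Fin n) K} :
    f ∈ Iw F k ↔ ∀ d ∈ f.support, k ≤ wt F d := Iff.rfl

end Stmt5Aux

namespace Stmt5Aux
variable {K : Type*} [Field K] {n : ℕ}

lemma single_add_sub {d : Fin n →₀ ℕ} {i : Fin n} (h : d i ≠ 0) :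
    Finsupp.single i 1 + (d - Finsupp.single i 1) = d := by
  ext j
  by_cases hj : j = i
  · subst hj; simp [Finsupp.single_apply, Finsupp.tsub_apply]; omega
  · simp [Finsupp.single_apply, Finsupp.tsub_apply, Ne.symm hj, hj]

lemma monomial_mem_pow {F : Set (Fin n)} {k : ℕ} {d : Fin n →₀ ℕ} (c : K)
    (h : k ≤ wt F d) :
    monomial d c ∈ (Ideal.span ((X : Fin n → MvPolynomial (Fin n) K) '' F)) ^ k := by
  induction k generalizing d with
  | zero => simp
  | succ k ih =>
    have hpos : 0 < wt F d := by omega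
    obtain ⟨i, hiF, hdi⟩ := exists_mem_of_wt_pos hpos
    have hd : Finsupp.single i 1 + (d - Finsupp.single i 1) = d := single_add_sub hdi
    have hwt : wt F d = 1 + wt F (d - Finsupp.single i 1) := by
      conv_lhs => rw [← hd]
      rw [wt_add, wt_single, if_pos hiF]
    have : monomial d c =
        (X i : MvPolynomial (Fin n) K) * monomial (d - Finsupp.single i 1) c := by
      rw [X, monomial_mul, one_mul, hd]
    rw [this, pow_succ']
    exact Ideal.mul_mem_mul (Ideal.subset_span ⟨i, hiF, rfl⟩) (ih (by omega))

lemma span_pow_eq (F : Set (Fin n)) (k : ℕ) :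
    (Ideal.span ((X : Fin n → MvPolynomial (Fin n) K) '' F)) ^ k = Iw F k := by
  apply le_antisymm
  · induction k with
    | zero =>
      intro f _ d _
      simp
    | succ k ih =>
      rw [pow_succ']
      refine Ideal.mul_le.mpr fun a ha b hb => ?_
      intro d hd
      classical
      rcases Finset.mem_add.mp (MvPolynomial.support_mul _ _ hd) with ⟨d1, h1, d2, h2, rfl⟩
      have hspan : Ideal.span ((X : Fin n → MvPolynomial (Fin n) K) '' F) ≤ Iw F 1 := by
        rw [Ideal.span_le]
        rintro _ ⟨i, hiF, rfl⟩
        show (X i : MvPolynomial (Fin n) K) ∈ Iw F 1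
        intro e he
        rw [MvPolynomial.support_X] at he
        simp only [Finset.mem_singleton] at he
        subst he
        rw [wt_single, if_pos hiF]
      have ha1 : ∀ e ∈ a.support, 1 ≤ wt F e := hspan ha
      have h2' := ih hb d2 h2
      rw [wt_add]
      have := ha1 d1 h1
      omega
  · intro f hf
    rw [show f = ∑ d ∈ f.support, monomial d (coeff d f) from
      (MvPolynomial.support_sum_monomial_coeff f).symm]
    exact Ideal.sum_mem _ fun d hd => monomial_mem_pow _ (hf d hd)

end Stmt5Aux

namespace Stmt5Aux
variable {K : Type*} [Field K] {n : ℕ}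

/-- the weight-`v` component of a polynomial -/
noncomputable def part (F : Set (Fin n)) (v : ℕ) (f : MvPolynomial (Fin n) K) :
    MvPolynomial (Fin n) K :=
  ∑ d ∈ f.support.filter (fun d => wt F d = v), monomial d (coeff d f)

lemma coeff_part (F : Set (Fin n)) (v : ℕ) (f : MvPolynomial (Fin n) K) (e : Fin n →₀ ℕ) :
    coeff e (part F v f) = if wt F e = v then coeff e f else 0 := by
  classical
  rw [part, MvPolynomial.coeff_sum]
  rw [show (∑ d ∈ f.support.filter (fun d => wt F d = v), coeff e (monomial d (coeff d f)))
      = ∑ d ∈ f.support.filter (fun d => wt F d = v), if d = e then coeff d f else 0 from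
    Finset.sum_congr rfl fun d _ => coeff_monomial _ _ _]
  rw [Finset.sum_ite_eq' _ e _]
  simp only [Finset.mem_filter, MvPolynomial.mem_support_iff]
  by_cases h1 : wt F e = v
  · by_cases h2 : coeff e f = 0 <;> simp [h1, h2]
  · simp [h1]

lemma wt_eq_of_mem_support_part {F : Set (Fin n)} {v : ℕ} {f : MvPolynomial (Fin n) K}
    {e : Fin n →₀ ℕ} (h : e ∈ (part F v f).support) : wt F e = v := by
  rw [MvPolynomial.mem_support_iff, coeff_part] at h
  by_contra hc
  rw [if_neg hc] at h
  exact h rfl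

lemma quasi_primary {F : Set (Fin n)} {k : ℕ} {a b : MvPolynomial (Fin n) K}
    (hab : a * b ∈ Iw F k) (ha : a ∉ Iw F 1) : b ∈ Iw F k := by
  classical
  by_contra hb
  rw [mem_Iw] at hb
  push_neg at hb
  obtain ⟨e0, he0, he0k⟩ := hb
  -- minimal weight occurring in b
  have hbne : b.support.Nonempty := ⟨e0, he0⟩
  have himg : (b.support.image (wt F)).Nonempty := hbne.image _
  set v := (b.support.image (wt F)).min' himg with hv
  have hvle : ∀ e ∈ b.support, v ≤ wt F e := fun e he =>
    Finset.min'_le _ _ (Finset.mem_image_of_mem _ he)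
  obtain ⟨ev, hev, hevv⟩ : ∃ e ∈ b.support, wt F e = v := by
    obtain ⟨e, he, hee⟩ := Finset.mem_image.mp ((b.support.image (wt F)).min'_mem himg)
    exact ⟨e, he, hee⟩
  have hvk : v < k := lt_of_le_of_lt (hvle e0 he0) (by omega)
  -- the weight-0 part of a is nonzero
  rw [mem_Iw] at ha
  push_neg at ha
  obtain ⟨d0, hd0, hd0w⟩ := ha
  have hd0w : wt F d0 = 0 := by omega
  have ha0 : part F 0 a ≠ 0 := fun h => by
    have := coeff_part F 0 a d0
    rw [h, if_pos hd0w, MvPolynomial.coeff_zero] at this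
    exact (MvPolynomial.mem_support_iff.mp hd0) this.symm
  have hbv : part F v b ≠ 0 := fun h => by
    have := coeff_part F v b ev
    rw [h, if_pos hevv, MvPolynomial.coeff_zero] at this
    exact (MvPolynomial.mem_support_iff.mp hev) this.symm
  -- coefficients of a*b at weight v agree with those of (part 0 a) * (part v b)
  have key : ∀ d, wt F d = v → coeff d (a * b) = coeff d (part F 0 a * part F v b) := by
    intro d hd
    rw [MvPolynomial.coeff_mul, MvPolynomial.coeff_mul]
    refine Finset.sum_congr rfl fun x hx => ?_
    rw [Finset.HasAntidiagonal.mem_antidiagonal] at hx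
    rw [coeff_part, coeff_part]
    by_cases h1 : wt F x.1 = 0 ∧ wt F x.2 = v
    · rw [if_pos h1.1, if_pos h1.2]
    · by_cases hz : coeff x.1 a = 0 ∨ coeff x.2 b = 0
      · rcases hz with hz | hz <;> rw [hz] <;>
          simp only [zero_mul, mul_zero] <;>
          split_ifs <;> simp [hz]
      · push_neg at hz
        exfalso
        apply h1
        have h2 : x.2 ∈ b.support := MvPolynomial.mem_support_iff.mpr hz.2
        have hx2 : v ≤ wt F x.2 := hvle _ h2
        have hsum : wt F x.1 + wt F x.2 = v := by rw [← wt_add, hx]; exact hd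
        omega
  -- the product of the parts is nonzero; pick a monomial of it
  have hprod : part F 0 a * part F v b ≠ 0 := mul_ne_zero ha0 hbv
  obtain ⟨d, hd⟩ := MvPolynomial.ne_zero_iff.mp hprod
  have hdsup : d ∈ (part F 0 a * part F v b).support := MvPolynomial.mem_support_iff.mpr hd
  have hdw : wt F d = v := by
    rcases Finset.mem_add.mp (MvPolynomial.support_mul _ _ hdsup) with ⟨d1, h1, d2, h2, rfl⟩
    rw [wt_add, wt_eq_of_mem_support_part h1, wt_eq_of_mem_support_part h2, zero_add]
  have : coeff d (a * b) ≠ 0 := by rw [key d hdw]; exact hd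
  have : k ≤ wt F d := hab d (MvPolynomial.mem_support_iff.mpr this)
  omega

lemma Iw_ne_top {F : Set (Fin n)} {k : ℕ} (hk : k ≠ 0) : (Iw F k : Ideal (MvPolynomial (Fin n) K)) ≠ ⊤ := by
  intro h
  have h1 : (1 : MvPolynomial (Fin n) K) ∈ Iw F k := h ▸ Submodule.mem_top
  have : (0 : Fin n →₀ ℕ) ∈ (1 : MvPolynomial (Fin n) K).support := by
    classical
    rw [← MvPolynomial.C_1, ← MvPolynomial.monomial_zero', MvPolynomial.support_monomial,
      if_neg (one_ne_zero' K)]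
    exact Finset.mem_singleton_self 0
  have := h1 0 this
  rw [wt_zero] at this
  omega

lemma isPrime_Iw1 (F : Set (Fin n)) : (Iw F 1 : Ideal (MvPolynomial (Fin n) K)).IsPrime := by
  refine ⟨Iw_ne_top one_ne_zero, fun {a b} hab => ?_⟩
  by_cases ha : a ∈ Iw F 1
  · exact Or.inl ha
  · exact Or.inr (quasi_primary hab ha)

lemma span_eq_Iw1 (F : Set (Fin n)) :
    Ideal.span ((X : Fin n → MvPolynomial (Fin n) K) '' F) = Iw F 1 := by
  rw [← pow_one (Ideal.span _), span_pow_eq]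

lemma radical_Iw {F : Set (Fin n)} {k : ℕ} (hk : k ≠ 0) :
    (Iw F k : Ideal (MvPolynomial (Fin n) K)).radical = Iw F 1 := by
  rw [← span_pow_eq, Ideal.radical_pow _ hk, Ideal.IsPrime.radical (span_eq_Iw1 (K := K) F ▸ isPrime_Iw1 (K := K) F), span_eq_Iw1]

lemma isPrimary_Iw {F : Set (Fin n)} {k : ℕ} (hk : k ≠ 0) :
    (Iw F k : Ideal (MvPolynomial (Fin n) K)).IsPrimary := by
  refine Ideal.isPrimary_iff.mpr ⟨Iw_ne_top hk, fun {x y} hxy => ?_⟩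
  by_cases hy : y ∈ Iw F 1
  · exact Or.inr (radical_Iw (K := K) hk ▸ hy)
  · exact Or.inl (quasi_primary (mul_comm x y ▸ hxy) hy)

lemma subset_of_span_le {F F' : Set (Fin n)}
    (h : Ideal.span ((X : Fin n → MvPolynomial (Fin n) K) '' F) ≤
      Ideal.span ((X : Fin n → MvPolynomial (Fin n) K) '' F')) : F ⊆ F' := by
  intro i hi
  have : (X i : MvPolynomial (Fin n) K) ∈ Iw F' 1 := by
    rw [← span_eq_Iw1]
    exact h (Ideal.subset_span ⟨i, hi, rfl⟩)
  have hs : Finsupp.single i 1 ∈ (X i : MvPolynomial (Fin n) K).support := by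
    classical
    rw [MvPolynomial.support_X]
    exact Finset.mem_singleton_self _
  have := this _ hs
  rw [wt_single] at this
  by_contra hc
  rw [if_neg hc] at this
  omega

end Stmt5Aux

namespace Stmt5Aux
variable {K : Type*} [Field K] {n : ℕ}

lemma wt_mono {F : Set (Fin n)} {d e : Fin n →₀ ℕ} (h : d ≤ e) : wt F d ≤ wt F e := by
  refine Finset.sum_le_sum fun i _ => ?_
  by_cases hi : i ∈ F <;> simp [Set.indicator, hi, h i]

lemma wt_sum {ι : Type*} (F : Set (Fin n)) (s : Finset ι) (g : ι → (Fin n →₀ ℕ)) :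
    wt F (∑ j ∈ s, g j) = ∑ j ∈ s, wt F (g j) := by
  classical
  induction s using Finset.induction with
  | empty => simp [wt_zero]
  | insert j s hj ih => rw [Finset.sum_insert hj, Finset.sum_insert hj, wt_add, ih]

lemma sum_two_pow_lt (N : ℕ) : ∑ r ∈ Finset.range N, 2^r < 2^N := by
  induction N with
  | zero => simp
  | succ N ih => rw [Finset.sum_range_succ, pow_succ]; omega

end Stmt5Aux


open Stmt5Aux

/-- Given pairwise distinct nonzero monomial prime ideals `P_1, ..., P_m` with
`P_j ⊄ P_i` for `i < j`, there are positive integers `k_1, ..., k_m` such that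
`Ass(S/(P_1^{t k_1} ∩ ... ∩ P_m^{t k_m})) = {P_1, ..., P_m}` for every `t > 0`. -/
theorem stmt5 {K : Type*} [Field K] (n m : ℕ)
    (P : Fin m → Ideal (MvPolynomial (Fin n) K))
    (hP : ∀ i, IsNonzeroMonomialPrime (P i))
    (hdistinct : ∀ i j, i ≠ j → P i ≠ P j)
    (hnc : ∀ i j, i < j → ¬ P j ≤ P i) :
    ∃ k : Fin m → ℕ, (∀ i, 0 < k i) ∧
      ∀ t : ℕ, 0 < t →
        associatedPrimes (MvPolynomial (Fin n) K)
            (MvPolynomial (Fin n) K ⧸ (⨅ i, P i ^ (t * k i))) =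
          Set.range P := by
  classical
  choose F hFne hPF using hP
  refine ⟨fun i => 2 ^ (i : ℕ), fun i => pow_pos two_pos _, fun t ht => ?_⟩
  set R := MvPolynomial (Fin n) K
  set Ki : Fin m → ℕ := fun i => t * 2 ^ (i : ℕ) with hKidef
  have hKi0 : ∀ i, Ki i ≠ 0 := fun i => Nat.mul_ne_zero ht.ne' (pow_ne_zero _ two_ne_zero)
  set I : Ideal R := ⨅ i, P i ^ (Ki i) with hIdef
  have hQ : ∀ i, P i ^ (Ki i) = Iw (F i) (Ki i) := fun i => by
    rw [hPF i, span_pow_eq]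
  have hprime : ∀ i, (P i).IsPrime := fun i => by
    rw [hPF i, span_eq_Iw1]; exact isPrime_Iw1 _
  have hprimary : ∀ i, (P i ^ (Ki i)).IsPrimary := fun i => by
    rw [hQ i]; exact isPrimary_Iw (hKi0 i)
  have hrad : ∀ i, (P i ^ (Ki i)).radical = P i := fun i => by
    rw [Ideal.radical_pow _ (hKi0 i), (hprime i).radical]
  have hFnc : ∀ i j, i < j → ¬ F j ⊆ F i := fun i j hij hsub =>
    hnc i j hij (by rw [hPF i, hPF j]; exact Ideal.span_mono (Set.image_mono hsub))
  apply Set.Subset.antisymm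
  · -- every associated prime is one of the P i
    rintro J hJa
    obtain ⟨hJprime, xbar, hJ⟩ := isAssociatedPrime_iff.mp hJa
    obtain ⟨x, rfl⟩ := Ideal.Quotient.mk_surjective xbar
    have hmemJ : ∀ r : R, r ∈ J ↔ r * x ∈ I := by
      intro r
      rw [hJ, Submodule.mem_colon_singleton,
        show r • (Ideal.Quotient.mk I x) = Ideal.Quotient.mk I (r * x) from rfl,
        Submodule.mem_bot, Ideal.Quotient.eq_zero_iff_mem]
    have hx : x ∉ I := by
      intro hxI
      apply hJprime.ne_top
      rw [Ideal.eq_top_iff_one, hmemJ, one_mul]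
      exact hxI
    set T : Finset (Fin m) := Finset.univ.filter (fun j => x ∉ P j ^ (Ki j)) with hT
    have hinf : T.inf (fun j => P j ^ (Ki j)) ≤ J := by
      intro r hr
      rw [hmemJ, hIdef, Submodule.mem_iInf]
      intro j
      by_cases hj : j ∈ T
      · exact Ideal.mul_mem_right _ _ ((Finset.inf_le (f := fun j => P j ^ (Ki j)) hj) hr)
      · rw [hT, Finset.mem_filter] at hj
        push_neg at hj
        exact Ideal.mul_mem_left _ _ (hj (Finset.mem_univ j))
    obtain ⟨i, hiT, hQiJ⟩ := (hJprime.inf_le').mp hinf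
    rw [hT, Finset.mem_filter] at hiT
    have hxQi : x ∉ P i ^ (Ki i) := hiT.2
    have h1 : P i ≤ J := by
      rw [← hrad i, ← hJprime.radical]
      exact Ideal.radical_mono hQiJ
    have h2 : J ≤ P i := by
      intro r hr
      have hrx : r * x ∈ P i ^ (Ki i) := by
        have := (hmemJ r).mp hr
        rw [hIdef, Submodule.mem_iInf] at this
        exact this i
      rcases (Ideal.isPrimary_iff.mp (hprimary i)).2 (mul_comm r x ▸ hrx) with h | h
      · exact absurd h hxQi
      · rwa [hrad i] at h
    exact ⟨i, le_antisymm h1 h2⟩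
  · -- every P i is an associated prime
    rintro _ ⟨i, rfl⟩
    -- choose variables
    set c : Fin m → Fin n := fun j =>
      if h : (F j \ F i).Nonempty then h.choose else (hFne j).choose with hc
    have hcFj : ∀ j, c j ∈ F j := by
      intro j
      rw [hc]
      by_cases h : (F j \ F i).Nonempty
      · simp only [dif_pos h]; exact h.choose_spec.1
      · simp only [dif_neg h]; exact (hFne j).choose_spec
    have hcFi : ∀ j, c j ∈ F i → F j ⊆ F i := by
      intro j hj
      by_contra hsub
      have h : (F j \ F i).Nonempty := Set.diff_nonempty.mpr hsub
      rw [hc] at hj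
      simp only [dif_pos h] at hj
      exact h.choose_spec.2 hj
    set dbase : Fin n →₀ ℕ := ∑ j ∈ Finset.univ.erase i, Finsupp.single (c j) (Ki j) with hdb
    have hsval : wt (F i) dbase = ∑ j ∈ Finset.univ.erase i, (if c j ∈ F i then Ki j else 0) := by
      rw [hdb, wt_sum]
      exact Finset.sum_congr rfl fun j _ => wt_single _ _ _
    have hslt : wt (F i) dbase < Ki i := by
      calc wt (F i) dbase
          = ∑ j ∈ Finset.univ.erase i, (if c j ∈ F i then Ki j else 0) := hsval
        _ ≤ ∑ j ∈ Finset.univ.erase i, (if (j:ℕ) < (i:ℕ) then Ki j else 0) := by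
            refine Finset.sum_le_sum fun j hj => ?_
            by_cases hcj : c j ∈ F i
            · have hji : j < i := by
                have hsub := hcFi j hcj
                have hne : j ≠ i := (Finset.mem_erase.mp hj).1
                rcases lt_trichotomy j i with h | h | h
                · exact h
                · exact absurd h hne
                · exact absurd hsub (hFnc i j h)
              rw [if_pos hcj, if_pos (Fin.lt_iff_val_lt_val.mp hji)]
            · rw [if_neg hcj]; exact Nat.zero_le _
        _ ≤ ∑ j : Fin m, (if (j:ℕ) < (i:ℕ) then Ki j else 0) :=
            Finset.sum_le_sum_of_subset (Finset.erase_subset _ _)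
        _ = ∑ r ∈ Finset.range m, (if r < (i:ℕ) then t * 2^r else 0) := by
            rw [hKidef]
            exact Fin.sum_univ_eq_sum_range (fun r => if r < (i:ℕ) then t * 2^r else 0) m
        _ = ∑ r ∈ (Finset.range m).filter (fun r => r < (i:ℕ)), t * 2^r :=
            (Finset.sum_filter _ _).symm
        _ ≤ ∑ r ∈ Finset.range (i:ℕ), t * 2^r :=
            Finset.sum_le_sum_of_subset
              (fun r hr => Finset.mem_range.mpr (Finset.mem_filter.mp hr).2)
        _ = t * ∑ r ∈ Finset.range (i:ℕ), 2^r := by rw [Finset.mul_sum]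
        _ < t * 2^(i:ℕ) := mul_lt_mul_of_pos_left (sum_two_pow_lt (i:ℕ)) ht
        _ = Ki i := rfl
    set ci0 := (hFne i).choose with hci0
    have hci0F : ci0 ∈ F i := (hFne i).choose_spec
    set d' : Fin n →₀ ℕ := dbase + Finsupp.single ci0 (Ki i - 1 - wt (F i) dbase) with hd'
    have hwd' : wt (F i) d' = Ki i - 1 := by
      rw [hd', wt_add, wt_single, if_pos hci0F]
      omega
    have hd'ge : ∀ j, j ≠ i → Ki j ≤ wt (F j) d' := by
      intro j hji
      have h1 : Finsupp.single (c j) (Ki j) ≤ dbase := by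
        rw [hdb]
        exact Finset.single_le_sum (f := fun j => Finsupp.single (c j) (Ki j))
          (fun _ _ => by positivity) (Finset.mem_erase.mpr ⟨hji, Finset.mem_univ j⟩)
      have h2 : dbase ≤ d' := by rw [hd']; exact le_add_of_nonneg_right (by positivity)
      calc Ki j = wt (F j) (Finsupp.single (c j) (Ki j)) := by
            rw [wt_single, if_pos (hcFj j)]
        _ ≤ wt (F j) d' := wt_mono (le_trans h1 h2)
    set x' : MvPolynomial (Fin n) K := monomial d' (1 : K) with hx'
    have hsupx' : x'.support = {d'} := by
      rw [hx', MvPolynomial.support_monomial, if_neg (one_ne_zero' K)]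
    have hx'Qj : ∀ j, j ≠ i → x' ∈ P j ^ (Ki j) := by
      intro j hji
      rw [hQ j]
      refine mem_Iw.mpr fun e he => ?_
      rw [hsupx', Finset.mem_singleton] at he
      subst he
      exact hd'ge j hji
    refine isAssociatedPrime_iff.mpr ⟨hprime i, Ideal.Quotient.mk I x', ?_⟩
    ext r
    rw [Submodule.mem_colon_singleton,
      show r • (Ideal.Quotient.mk I x') = Ideal.Quotient.mk I (r * x') from rfl,
      Submodule.mem_bot, Ideal.Quotient.eq_zero_iff_mem, hIdef, Submodule.mem_iInf]
    constructor
    · intro hr j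
      by_cases hji : j = i
      · subst hji
        rw [hQ j]
        refine mem_Iw.mpr fun e he => ?_
        rcases Finset.mem_add.mp (MvPolynomial.support_mul _ _ he) with ⟨e1, h1, e2, h2, rfl⟩
        rw [hsupx', Finset.mem_singleton] at h2
        subst h2
        have hr1 : 1 ≤ wt (F j) e1 := by
          have hrmem : r ∈ Iw (F j) 1 := by rw [← span_eq_Iw1, ← hPF j]; exact hr
          exact mem_Iw.mp hrmem e1 h1
        rw [wt_add, hwd']
        have := hKi0 j
        omega
      · exact Ideal.mul_mem_left _ _ (hx'Qj j hji)
    · intro hall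
      have hrx : r * x' ∈ Iw (F i) (Ki i) := by rw [← hQ i]; exact hall i
      rw [hPF i, span_eq_Iw1]
      refine mem_Iw.mpr fun e he => ?_
      have hco : coeff (e + d') (r * x') = coeff e r := by
        rw [hx', MvPolynomial.coeff_mul_monomial, mul_one]
      have hsup : e + d' ∈ (r * x').support := by
        rw [MvPolynomial.mem_support_iff, hco]
        exact MvPolynomial.mem_support_iff.mp he
      have hKK := mem_Iw.mp hrx _ hsup
      rw [wt_add, hwd'] at hKK
      have := hKi0 i
      omega
end

section
/- Let K be a field and S = K[x_1, ..., x_n] the polynomial ring with n ≥ 2. There is no monomial ideal I ⊆ S such that the set of associated primes of S/I equals {(x_1), (x_2)} and the set of associated primes of S/I^s equals {(x_1), (x_2), (x_1, x_2)} for all sufficiently large s; that is, no monomial ideal I satisfies Ass(I) = {(x_1), (x_2)} and Ass^∞(I) = {(x_1), (x_2), (x_1, x_2)}. -/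
set_option maxHeartbeats 1000000
set_option synthInstance.maxHeartbeats 400000

open MvPolynomial

/-- If `ν ∉ I` then all variables `X j` with `X j * ν ∈ I` lie in a single
associated prime of `S/I`, which is one of `(X i0)`, `(X i1)` when those are the
only associated primes. -/
private lemma aux_key {K : Type*} [Field K] {n : ℕ} {I : Ideal (MvPolynomial (Fin n) K)}
    {i0 i1 : Fin n} (h01 : i0 ≠ i1)
    (hA : ∀ P ∈ associatedPrimes (MvPolynomial (Fin n) K) (MvPolynomial (Fin n) K ⧸ I),
      P = Ideal.span {X i0} ∨ P = Ideal.span {X i1})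
    {ν : MvPolynomial (Fin n) K} (hν : ν ∉ I) :
    ∃ k : Fin n, (k = i0 ∨ k = i1) ∧ ∀ j : Fin n, X j * ν ∈ I → j = k := by
  have hm : (Ideal.Quotient.mk I ν) ≠ 0 :=
    fun h => hν (Ideal.Quotient.eq_zero_iff_mem.mp h)
  obtain ⟨P, hP, hle⟩ := exists_le_isAssociatedPrime_of_isNoetherianRing
    (MvPolynomial (Fin n) K) (Ideal.Quotient.mk I ν) hm
  have hXj : ∀ j : Fin n, X j * ν ∈ I → X j ∈ P := by
    intro j hj
    apply hle
    rw [Submodule.mem_colon_singleton, Submodule.mem_bot, ← Ideal.Quotient.mk_eq_mk,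
      ← Submodule.Quotient.mk_smul, Submodule.Quotient.mk_eq_zero, smul_eq_mul]
    exact hj
  rcases hA P hP with h | h
  · refine ⟨i0, Or.inl rfl, fun j hj => ?_⟩
    have := hXj j hj
    rw [h, Ideal.mem_span_singleton] at this
    exact (X_dvd_X.mp this).symm
  · refine ⟨i1, Or.inr rfl, fun j hj => ?_⟩
    have := hXj j hj
    rw [h, Ideal.mem_span_singleton] at this
    exact (X_dvd_X.mp this).symm

/-- There is no monomial ideal `I` in `S = K[x_1, ..., x_n]` (`n ≥ 2`) with
`Ass(I) = {(x_1), (x_2)}` and `Ass^∞(I) = {(x_1), (x_2), (x_1, x_2)}`. -/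
theorem stmt8 {K : Type*} [Field K] (n : ℕ) (hn : 2 ≤ n) :
    ¬ ∃ I : Ideal (MvPolynomial (Fin n) K), IsMonomialIdeal I ∧
      associatedPrimes (MvPolynomial (Fin n) K) (MvPolynomial (Fin n) K ⧸ I) =
        ({Ideal.span {X (⟨0, by omega⟩ : Fin n)},
          Ideal.span {X (⟨1, by omega⟩ : Fin n)}} :
            Set (Ideal (MvPolynomial (Fin n) K))) ∧
      ∃ s₀ : ℕ, ∀ s ≥ s₀,
        associatedPrimes (MvPolynomial (Fin n) K) (MvPolynomial (Fin n) K ⧸ I ^ s) =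
          ({Ideal.span {X (⟨0, by omega⟩ : Fin n)},
            Ideal.span {X (⟨1, by omega⟩ : Fin n)},
            Ideal.span {X (⟨0, by omega⟩ : Fin n), X (⟨1, by omega⟩ : Fin n)}} :
              Set (Ideal (MvPolynomial (Fin n) K))) := by
  classical
  rintro ⟨I, ⟨A, hIA⟩, hAss, s₀, hAss'⟩
  set i0 : Fin n := ⟨0, by omega⟩ with hi0
  set i1 : Fin n := ⟨1, by omega⟩ with hi1
  have h01 : i0 ≠ i1 := Fin.ne_of_val_ne (by simp [hi0, hi1])
  -- every associated prime of S/I is (X i0) or (X i1)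
  have hA2 : ∀ P ∈ associatedPrimes (MvPolynomial (Fin n) K) (MvPolynomial (Fin n) K ⧸ I),
      P = Ideal.span {X i0} ∨ P = Ideal.span {X i1} := by
    intro P hP
    rw [hAss] at hP
    simpa using hP
  -- membership of monomials in I
  have hmem : ∀ c : Fin n →₀ ℕ, monomial c (1 : K) ∈ I ↔ ∃ a ∈ A, a ≤ c := by
    intro c
    rw [hIA, mem_ideal_span_monomial_image]
    constructor
    · intro h
      refine h c ?_
      rw [support_monomial, if_neg one_ne_zero]
      exact Finset.mem_singleton_self c
    · rintro ⟨a, ha, hle⟩ xi hxi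
      rw [support_monomial, if_neg one_ne_zero, Finset.mem_singleton] at hxi
      exact ⟨a, ha, hxi ▸ hle⟩
  -- monotonicity of membership
  have hmono : ∀ {c c' : Fin n →₀ ℕ}, c ≤ c' → monomial c (1 : K) ∈ I →
      monomial c' (1 : K) ∈ I := by
    intro c c' hcc h
    rw [hmem] at h ⊢
    obtain ⟨a, ha, hle⟩ := h
    exact ⟨a, ha, hle.trans hcc⟩
  -- evaluation helper
  have happ : ∀ (α β : ℕ) (j : Fin n),
      (Finsupp.single i0 α + Finsupp.single i1 β) j
        = if i0 = j then α else if i1 = j then β else 0 := by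
    intro α β j
    rw [Finsupp.add_apply, Finsupp.single_apply, Finsupp.single_apply]
    split_ifs with ha hb hb
    · exact absurd (ha.trans hb.symm) h01
    · exact add_zero _
    · exact zero_add _
    · exact add_zero _
  -- stripping other variables
  have strip : ∀ N : ℕ, ∀ c : Fin n →₀ ℕ, (c.sum fun _ v => v) ≤ N →
      monomial c (1 : K) ∈ I →
      monomial (Finsupp.single i0 (c i0) + Finsupp.single i1 (c i1)) (1 : K) ∈ I := by
    intro N
    induction N with
    | zero =>
      intro c hc hcI
      have hc0 : c = 0 := by
        apply Finsupp.ext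
        intro j
        simp only [Finsupp.coe_zero, Pi.zero_apply]
        by_contra hj
        have hj' : j ∈ c.support := Finsupp.mem_support_iff.mpr hj
        have h2 : c j ≤ c.sum fun _ v => v :=
          Finset.single_le_sum (f := fun a => c a) (fun _ _ => Nat.zero_le _) hj'
        omega
      subst hc0
      simpa using hcI
    | succ N ih =>
      intro c hc hcI
      by_cases hrc : Finsupp.single i0 (c i0) + Finsupp.single i1 (c i1) = c
      · rw [hrc]; exact hcI
      · obtain ⟨j, hj0, hj1, hcj⟩ : ∃ j : Fin n, j ≠ i0 ∧ j ≠ i1 ∧ c j ≠ 0 := by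
          by_contra h
          push_neg at h
          apply hrc
          apply Finsupp.ext
          intro j
          rw [happ]
          split_ifs with ha hb
          · rw [ha]
          · rw [hb]
          · exact ((h j (fun e => ha e.symm) (fun e => hb e.symm))).symm
        set c' : Fin n →₀ ℕ := c - Finsupp.single j 1 with hc'
        have hle1 : Finsupp.single j 1 ≤ c :=
          Finsupp.single_le_iff.mpr (Nat.one_le_iff_ne_zero.mpr hcj)
        have hc'add : c' + Finsupp.single j 1 = c := tsub_add_cancel_of_le hle1
        have hsum : (c'.sum fun _ v => v) + 1 = c.sum fun _ v => v := by
          rw [← hc'add, Finsupp.sum_add_index' (fun _ => rfl) (fun _ _ _ => rfl),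
            Finsupp.sum_single_index rfl]
        have he0 : c' i0 = c i0 := by
          rw [hc', Finsupp.tsub_apply, Finsupp.single_eq_of_ne' hj0, Nat.sub_zero]
        have he1 : c' i1 = c i1 := by
          rw [hc', Finsupp.tsub_apply, Finsupp.single_eq_of_ne' hj1, Nat.sub_zero]
        by_cases hc'I : monomial c' (1 : K) ∈ I
        · have := ih c' (by omega) hc'I
          rwa [he0, he1] at this
        · exfalso
          have hmul : X j * monomial c' (1 : K) = monomial c 1 := by
            rw [← pow_one (X j : MvPolynomial (Fin n) K), ← monomial_single_add,
              show Finsupp.single j 1 + c' = c from by rw [add_comm]; exact hc'add]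
          obtain ⟨k, hk, hall⟩ := aux_key h01 hA2 hc'I
          have hjk := hall j (by rw [hmul]; exact hcI)
          rcases hk with hk | hk
          · exact hj0 (hjk.trans hk)
          · exact hj1 (hjk.trans hk)
  -- monotonicity in the two indices
  have Emono : ∀ {α β α' β' : ℕ}, α ≤ α' → β ≤ β' →
      monomial (Finsupp.single i0 α + Finsupp.single i1 β) (1 : K) ∈ I →
      monomial (Finsupp.single i0 α' + Finsupp.single i1 β') (1 : K) ∈ I := by
    intro α β α' β' hα hβ h
    refine hmono ?_ h
    rw [Finsupp.le_def]
    intro j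
    rw [happ, happ]
    split_ifs <;> omega
  -- nonemptiness: some pure (i0,i1)-monomial lies in I
  have hex : ∃ α β : ℕ,
      monomial (Finsupp.single i0 α + Finsupp.single i1 β) (1 : K) ∈ I := by
    have hP0 : Ideal.span {X i0} ∈
        associatedPrimes (MvPolynomial (Fin n) K) (MvPolynomial (Fin n) K ⧸ I) := by
      rw [hAss]; exact Set.mem_insert _ _
    obtain ⟨hpr, m, hm⟩ := isAssociatedPrime_iff.mp hP0
    obtain ⟨y, rfl⟩ := Ideal.Quotient.mk_surjective m
    have hyI : y ∉ I := by
      intro hy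
      apply hpr.ne_top
      rw [hm, Ideal.Quotient.eq_zero_iff_mem.mpr hy, Submodule.colon_singleton_zero]
    have hXy : X i0 * y ∈ I := by
      have hX : (X i0 : MvPolynomial (Fin n) K) ∈ Ideal.span {X i0} :=
        Ideal.subset_span rfl
      rw [hm, Submodule.mem_colon_singleton, Submodule.mem_bot, ← Ideal.Quotient.mk_eq_mk,
        ← Submodule.Quotient.mk_smul, Submodule.Quotient.mk_eq_zero, smul_eq_mul] at hX
      exact hX
    have hy0 : y ≠ 0 := fun h => hyI (h ▸ I.zero_mem)
    have hne : X i0 * y ≠ 0 := mul_ne_zero (X_ne_zero _) hy0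
    obtain ⟨c, hc⟩ : ∃ c, c ∈ (X i0 * y).support := by
      rcases Finset.eq_empty_or_nonempty (X i0 * y).support with h | h
      · exact absurd (support_eq_empty.mp h) hne
      · exact h
    have hXyI := hXy
    rw [hIA, mem_ideal_span_monomial_image] at hXyI
    obtain ⟨a, ha, _⟩ := hXyI c hc
    have haI : monomial a (1 : K) ∈ I := (hmem a).mpr ⟨a, ha, le_rfl⟩
    exact ⟨a i0, a i1, strip _ a le_rfl haI⟩
  obtain ⟨α₀, β₀, hE₀⟩ := hex
  -- the minimal exponents
  set SA : Set ℕ := {α | ∃ β, monomial (Finsupp.single i0 α + Finsupp.single i1 β) (1 : K) ∈ I}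
    with hSA
  set SB : Set ℕ := {β | ∃ α, monomial (Finsupp.single i0 α + Finsupp.single i1 β) (1 : K) ∈ I}
    with hSB
  set aMin := sInf SA with haMin
  set bMin := sInf SB with hbMin
  obtain ⟨βa, hβa⟩ : aMin ∈ SA := Nat.sInf_mem ⟨α₀, β₀, hE₀⟩
  obtain ⟨αb, hαb⟩ : bMin ∈ SB := Nat.sInf_mem ⟨β₀, α₀, hE₀⟩
  -- the corner monomial lies in I
  have hw : monomial (Finsupp.single i0 aMin + Finsupp.single i1 bMin) (1 : K) ∈ I := by
    set SB2 : Set ℕ :=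
      {β | monomial (Finsupp.single i0 aMin + Finsupp.single i1 β) (1 : K) ∈ I} with hSB2
    have hβs : sInf SB2 ∈ SB2 := Nat.sInf_mem ⟨βa, hβa⟩
    set βs := sInf SB2 with hβsd
    have hble : bMin ≤ βs := Nat.sInf_le ⟨aMin, hβs⟩
    rcases eq_or_lt_of_le hble with heq | hlt
    · rw [heq]; exact hβs
    · exfalso
      have hβpred : βs - 1 ∉ SB2 := Nat.notMem_of_lt_sInf (by omega)
      set SA2 : Set ℕ :=
        {α | monomial (Finsupp.single i0 α + Finsupp.single i1 (βs - 1)) (1 : K) ∈ I} with hSA2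
      have hSA2ne : SA2.Nonempty := ⟨αb, Emono le_rfl (by omega) hαb⟩
      have hαs : sInf SA2 ∈ SA2 := Nat.sInf_mem hSA2ne
      set αs := sInf SA2 with hαsd
      have hale : aMin ≤ αs := Nat.sInf_le ⟨βs - 1, hαs⟩
      have hane : aMin ≠ αs := fun h => hβpred (show monomial
        (Finsupp.single i0 aMin + Finsupp.single i1 (βs - 1)) (1 : K) ∈ I from h ▸ hαs)
      have hαpos : aMin < αs := lt_of_le_of_ne hale hane
      have hαpred : αs - 1 ∉ SA2 := Nat.notMem_of_lt_sInf (by omega)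
      have hαpred' :
          monomial (Finsupp.single i0 (αs - 1) + Finsupp.single i1 (βs - 1)) (1 : K) ∉ I :=
        hαpred
      obtain ⟨k, hk, hall⟩ := aux_key h01 hA2 hαpred'
      have hmul0 : X i0 * monomial (Finsupp.single i0 (αs - 1) + Finsupp.single i1 (βs - 1))
          (1 : K) = monomial (Finsupp.single i0 αs + Finsupp.single i1 (βs - 1)) (1 : K) := by
        have hexp : Finsupp.single i0 1 +
            (Finsupp.single i0 (αs - 1) + Finsupp.single i1 (βs - 1))
            = Finsupp.single i0 αs + Finsupp.single i1 (βs - 1) := by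
          rw [← add_assoc, ← Finsupp.single_add, show 1 + (αs - 1) = αs from by omega]
        rw [← pow_one (X i0 : MvPolynomial (Fin n) K), ← monomial_single_add, hexp]
      have hmul1 : X i1 * monomial (Finsupp.single i0 (αs - 1) + Finsupp.single i1 (βs - 1))
          (1 : K) = monomial (Finsupp.single i0 (αs - 1) + Finsupp.single i1 βs) (1 : K) := by
        have hexp : Finsupp.single i1 1 +
            (Finsupp.single i0 (αs - 1) + Finsupp.single i1 (βs - 1))
            = Finsupp.single i0 (αs - 1) + Finsupp.single i1 βs := by
          rw [add_comm (Finsupp.single i0 (αs - 1)) (Finsupp.single i1 (βs - 1)), ← add_assoc,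
            ← Finsupp.single_add, show 1 + (βs - 1) = βs from by omega, add_comm]
        rw [← pow_one (X i1 : MvPolynomial (Fin n) K), ← monomial_single_add, hexp]
      have h0k := hall i0 (by rw [hmul0]; exact hαs)
      have h1k := hall i1 (by rw [hmul1]; exact Emono (by omega) le_rfl hβs)
      exact h01 (h0k.trans h1k.symm)
  set w : Fin n →₀ ℕ := Finsupp.single i0 aMin + Finsupp.single i1 bMin with hwdef
  -- I is the principal ideal on the corner monomial
  have hIw : I = Ideal.span {monomial w (1 : K)} := by
    apply le_antisymm
    · intro f hf
      rw [hIA, mem_ideal_span_monomial_image] at hf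
      have himg : ((fun a => monomial a (1 : K)) '' {w} : Set (MvPolynomial (Fin n) K))
          = {monomial w (1 : K)} := Set.image_singleton
      rw [← himg, mem_ideal_span_monomial_image]
      intro c hc
      obtain ⟨a, ha, hle⟩ := hf c hc
      have haI : monomial a (1 : K) ∈ I := (hmem a).mpr ⟨a, ha, le_rfl⟩
      have hstr := strip _ a le_rfl haI
      have ha0 : aMin ≤ a i0 := Nat.sInf_le ⟨a i1, hstr⟩
      have ha1 : bMin ≤ a i1 := Nat.sInf_le ⟨a i0, hstr⟩
      refine ⟨w, rfl, ?_⟩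
      rw [Finsupp.le_def]
      intro j
      have hj := Finsupp.le_def.mp hle j
      rw [hwdef, happ]
      split_ifs with h1 h2
      · subst h1; omega
      · subst h2; omega
      · omega
    · rw [Ideal.span_le, Set.singleton_subset_iff]
      exact hw
  -- now look at a large power
  set s := max s₀ 1 with hs
  have hsI := hAss' s (le_max_left _ _)
  have hpow : I ^ s = Ideal.span ((fun a => monomial a (1 : K)) '' {s • w}) := by
    have himg : ((fun a => monomial a (1 : K)) '' {s • w} : Set (MvPolynomial (Fin n) K))
        = {monomial (s • w) (1 : K)} := Set.image_singleton
    rw [hIw, Ideal.span_singleton_pow, monomial_pow, one_pow, himg]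
  have hP01 : Ideal.span {X i0, X i1} ∈
      associatedPrimes (MvPolynomial (Fin n) K) (MvPolynomial (Fin n) K ⧸ I ^ s) := by
    rw [hsI]
    exact Set.mem_insert_iff.mpr (Or.inr (Set.mem_insert_iff.mpr (Or.inr rfl)))
  obtain ⟨hpr, m, hm⟩ := isAssociatedPrime_iff.mp hP01
  obtain ⟨y, rfl⟩ := Ideal.Quotient.mk_surjective m
  have hyI : y ∉ I ^ s := by
    intro hy
    apply hpr.ne_top
    rw [hm, Ideal.Quotient.eq_zero_iff_mem.mpr hy, Submodule.colon_singleton_zero]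
  have hXy : ∀ i : Fin n, X i ∈ Ideal.span ({X i0, X i1} : Set (MvPolynomial (Fin n) K)) →
      X i * y ∈ I ^ s := by
    intro i hX
    rw [hm, Submodule.mem_colon_singleton, Submodule.mem_bot, ← Ideal.Quotient.mk_eq_mk,
      ← Submodule.Quotient.mk_smul, Submodule.Quotient.mk_eq_zero, smul_eq_mul] at hX
    exact hX
  have hXy0 : X i0 * y ∈ I ^ s := hXy i0 (Ideal.subset_span (Set.mem_insert _ _))
  have hXy1 : X i1 * y ∈ I ^ s := hXy i1 (Ideal.subset_span (Set.mem_insert_of_mem _ rfl))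
  -- find a bad exponent in the support of y
  obtain ⟨c, hc, hcw⟩ : ∃ c ∈ y.support, ¬ s • w ≤ c := by
    by_contra h
    push_neg at h
    apply hyI
    rw [hpow, mem_ideal_span_monomial_image]
    intro c hc
    exact ⟨s • w, rfl, h c hc⟩
  apply hcw
  have hsup : ∀ i : Fin n, X i * y ∈ I ^ s → s • w ≤ Finsupp.single i 1 + c := by
    intro i hXiy
    rw [hpow, mem_ideal_span_monomial_image] at hXiy
    have hcmem : Finsupp.single i 1 + c ∈ (X i * y).support := by
      rw [mem_support_iff, coeff_X_mul]
      exact mem_support_iff.mp hc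
    obtain ⟨si, hsi, hle⟩ := hXiy _ hcmem
    rw [Set.mem_singleton_iff] at hsi
    exact hsi ▸ hle
  have h0 := hsup i0 hXy0
  have h1 := hsup i1 hXy1
  rw [Finsupp.le_def]
  intro j
  by_cases hj : j = i0
  · have := Finsupp.le_def.mp h1 j
    rwa [Finsupp.add_apply,
      Finsupp.single_eq_of_ne' (show i1 ≠ j from fun e => h01 (e.trans hj).symm),
      zero_add] at this
  · have := Finsupp.le_def.mp h0 j
    rwa [Finsupp.add_apply, Finsupp.single_eq_of_ne' (fun e => hj e.symm), zero_add] at this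
end

section
/- Let K be a field, S = K[x_1, ..., x_n] the polynomial ring, I ⊆ S a monomial ideal with minimal monomial generating set G(I), and P = P_F = ({x_i : i ∈ F}) a monomial prime ideal. Let S' = K[x_i : i ∈ F] and let J ⊆ S' be the ideal generated by the monomials u*, u ∈ G(I), where u* is obtained from u by substituting x_j ↦ 1 for every j ∉ F. Then for every positive integer s, P is an associated prime of S/I^s if and only if the maximal graded ideal ({x_i : i ∈ F}) of S' is an associated prime of S'/J^s. -/
open MvPolynomial

namespace Stmt10Aux

/-- `s`-fold sumsets of a set in an additive monoid. -/
def SumsOf {M : Type*} [AddCommMonoid M] : ℕ → Set M → Set M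
  | 0, _ => {0}
  | s + 1, A => Set.image2 (· + ·) A (SumsOf s A)

theorem SumsOf_image {M N : Type*} [AddCommMonoid M] [AddCommMonoid N]
    (f : M →+ N) (s : ℕ) (A : Set M) : SumsOf s (f '' A) = f '' SumsOf s A := by
  induction s with
  | zero => simp [SumsOf]
  | succ s ih =>
      simp only [SumsOf, ih, Set.image2_image_left, Set.image2_image_right,
        Set.image_image2, map_add]

variable {K : Type*} [Field K] {σ : Type*}

theorem span_monomial_pow (A : Set (σ →₀ ℕ)) (s : ℕ) :
    (Ideal.span ((fun a => monomial a (1 : K)) '' A)) ^ s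
      = Ideal.span ((fun a => (monomial a (1 : K) : MvPolynomial σ K)) '' SumsOf s A) := by
  induction s with
  | zero =>
      simp only [pow_zero, SumsOf, Set.image_singleton]
      rw [monomial_zero', C_1, Ideal.span_singleton_one, Ideal.one_eq_top]
  | succ s ih =>
      rw [pow_succ', ih, Ideal.span_mul_span']
      congr 1
      rw [← Set.image2_mul]
      simp only [SumsOf, Set.image2_image_left, Set.image2_image_right, Set.image_image2,
        monomial_mul, one_mul]

theorem mul_monomial_mem_span_iff (T : Set (σ →₀ ℕ)) (p : MvPolynomial σ K) (e : σ →₀ ℕ) :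
    p * monomial e 1 ∈ Ideal.span ((fun a => (monomial a (1 : K) : MvPolynomial σ K)) '' T) ↔
      ∀ u ∈ p.support, ∃ t ∈ T, t ≤ u + e := by
  constructor
  · intro h u hu
    refine mem_ideal_span_monomial_image.mp h (u + e) ?_
    rw [mem_support_iff, coeff_mul_monomial, mul_one]
    exact mem_support_iff.mp hu
  · intro h
    have hdec : p * monomial e 1 = ∑ u ∈ p.support, monomial u (coeff u p) * monomial e 1 := by
      rw [← Finset.sum_mul, ← p.as_sum]
    rw [hdec]
    refine Ideal.sum_mem _ fun u hu => ?_
    obtain ⟨t, ht, hle⟩ := h u hu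
    have : (monomial u (coeff u p) : MvPolynomial σ K) * monomial e 1
        = monomial (u + e - t) (coeff u p) * monomial t 1 := by
      rw [monomial_mul, monomial_mul, mul_one, tsub_add_cancel_of_le hle]
    rw [this]
    exact Ideal.mul_mem_left _ _ (Ideal.subset_span ⟨t, ht, rfl⟩)

theorem span_X_eq_ker (F : Set σ) [DecidablePred (· ∈ F)] :
    Ideal.span ((X : σ → MvPolynomial σ K) '' F)
      = RingHom.ker ((aeval (fun i => if i ∈ F then 0 else X i) :
          MvPolynomial σ K →ₐ[K] MvPolynomial σ K) : MvPolynomial σ K →+* MvPolynomial σ K) := by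
  set g : σ → MvPolynomial σ K := fun i => if i ∈ F then 0 else X i with hg
  apply le_antisymm
  · rw [Ideal.span_le]
    rintro _ ⟨i, hi, rfl⟩
    simp [RingHom.mem_ker, hg, if_pos hi]
  · intro p hp
    rw [RingHom.mem_ker] at hp
    have key : ∀ q : MvPolynomial σ K,
        q - aeval g q ∈ Ideal.span ((X : σ → MvPolynomial σ K) '' F) := by
      intro q
      induction q using MvPolynomial.induction_on with
      | C a => simp
      | add q r hq hr =>
          have : q + r - aeval g (q + r) = (q - aeval g q) + (r - aeval g r) := by
            rw [map_add]; ring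
          rw [this]; exact add_mem hq hr
      | mul_X q i hq =>
          by_cases hi : i ∈ F
          · have : q * X i - aeval g (q * X i) = q * X i := by
              rw [map_mul, aeval_X, hg]; simp [if_pos hi]
            rw [this]
            exact Ideal.mul_mem_left _ _ (Ideal.subset_span ⟨i, hi, rfl⟩)
          · have : q * X i - aeval g (q * X i) = (q - aeval g q) * X i := by
              rw [map_mul, aeval_X, hg]; simp only [if_neg hi]; ring
            rw [this]
            exact Ideal.mul_mem_right _ _ hq
    have hp' : (aeval g) p = 0 := hp
    have := key p
    rwa [hp', sub_zero] at this

theorem mem_ann_iff (Q : Ideal (MvPolynomial σ K)) (h r : MvPolynomial σ K) :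
    r ∈ (⊥ : Submodule (MvPolynomial σ K) (MvPolynomial σ K ⧸ Q)).colon {Ideal.Quotient.mk Q h} ↔
      r * h ∈ Q := by
  rw [Submodule.mem_colon_singleton, Submodule.mem_bot]
  have : r • (Ideal.Quotient.mk Q h) = Ideal.Quotient.mk Q (r * h) := rfl
  rw [this, Ideal.Quotient.eq_zero_iff_mem]

theorem subtypeDomain_single_mem {F : Set σ} (i : {x : σ // x ∈ F}) :
    (Finsupp.single (i : σ) 1 : σ →₀ ℕ).subtypeDomain (· ∈ F) = Finsupp.single i 1 := by
  ext j
  classical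
  simp only [Finsupp.subtypeDomain_apply, Finsupp.single_apply]
  by_cases hij : i = j
  · simp [hij]
  · rw [if_neg (fun h => hij (Subtype.ext h)), if_neg hij]

end Stmt10Aux

open Stmt10Aux

/-- Given a monomial ideal `I ⊆ S = K[x_1, ..., x_n]` with minimal monomial generating
set `G(I)` (encoded by the set `A` of exponent vectors, no one dividing another), and a
monomial prime ideal `P = P_F`, let `J` be the ideal of `S' = K[x_i : i ∈ F]` generated
by the monomials `u*`, `u ∈ G(I)`, obtained by substituting `x_j ↦ 1` for `j ∉ F`
(i.e. by restricting the exponent vectors to `F`).  Then for every positive integer `s`,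
`P ∈ Ass(S/I^s)` if and only if the maximal graded ideal `({x_i : i ∈ F})` of `S'`
belongs to `Ass(S'/J^s)`. -/
theorem stmt10 {K : Type*} [Field K] (n : ℕ)
    (I : Ideal (MvPolynomial (Fin n) K)) (A : Set (Fin n →₀ ℕ))
    (hgen : I = Ideal.span
      ((fun a => (monomial a (1 : K) : MvPolynomial (Fin n) K)) '' A))
    (hmin : ∀ a ∈ A, ∀ b ∈ A, a ≠ b → ¬ b ≤ a)
    (F : Set (Fin n)) (P : Ideal (MvPolynomial (Fin n) K))
    (hPF : P = Ideal.span ((X : Fin n → MvPolynomial (Fin n) K) '' F))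
    (J : Ideal (MvPolynomial {i : Fin n // i ∈ F} K))
    (hJ : J = Ideal.span ((fun a =>
      (monomial (a.subtypeDomain (· ∈ F)) (1 : K) :
        MvPolynomial {i : Fin n // i ∈ F} K)) '' A)) :
    ∀ s : ℕ, 0 < s →
      (P ∈ associatedPrimes (MvPolynomial (Fin n) K)
          (MvPolynomial (Fin n) K ⧸ I ^ s) ↔
        Ideal.span (Set.range (X : {i : Fin n // i ∈ F} →
            MvPolynomial {i : Fin n // i ∈ F} K)) ∈
          associatedPrimes (MvPolynomial {i : Fin n // i ∈ F} K)
            (MvPolynomial {i : Fin n // i ∈ F} K ⧸ J ^ s)) := by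
  intro s _hs
  classical
  -- notation
  set ρ : (Fin n →₀ ℕ) → ({i : Fin n // i ∈ F} →₀ ℕ) :=
    fun b => b.subtypeDomain (· ∈ F) with hρ
  set B : Set (Fin n →₀ ℕ) := SumsOf s A with hB
  set M : Ideal (MvPolynomial {i : Fin n // i ∈ F} K) :=
    Ideal.span (Set.range (X : {i : Fin n // i ∈ F} →
      MvPolynomial {i : Fin n // i ∈ F} K)) with hM
  -- descriptions of the powers
  have hIs : I ^ s = Ideal.span
      ((fun a => (monomial a (1 : K) : MvPolynomial (Fin n) K)) '' B) := by
    rw [hgen, span_monomial_pow]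
  have hJ' : J = Ideal.span
      ((fun a => (monomial a (1 : K) : MvPolynomial {i : Fin n // i ∈ F} K)) '' (ρ '' A)) := by
    rw [hJ, Set.image_image]
  have hρsum : SumsOf s (ρ '' A) = ρ '' B := by
    rw [hB]
    exact SumsOf_image (Finsupp.subtypeDomainAddMonoidHom (M := ℕ) (p := (· ∈ F))) s A
  have hJs : J ^ s = Ideal.span
      ((fun a => (monomial a (1 : K) : MvPolynomial {i : Fin n // i ∈ F} K)) '' (ρ '' B)) := by
    rw [hJ', span_monomial_pow, hρsum]
  -- membership characterizations
  have memIs : ∀ (p : MvPolynomial (Fin n) K) (e : Fin n →₀ ℕ),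
      p * monomial e 1 ∈ I ^ s ↔ ∀ u ∈ p.support, ∃ b ∈ B, b ≤ u + e := by
    intro p e; rw [hIs, mul_monomial_mem_span_iff]
  have memJs : ∀ (q : MvPolynomial {i : Fin n // i ∈ F} K) (e : {i : Fin n // i ∈ F} →₀ ℕ),
      q * monomial e 1 ∈ J ^ s ↔ ∀ u ∈ q.support, ∃ b ∈ B, ρ b ≤ u + e := by
    intro q e
    rw [hJs, mul_monomial_mem_span_iff]
    constructor
    · intro h u hu
      obtain ⟨t, ⟨b, hb, rfl⟩, hle⟩ := h u hu
      exact ⟨b, hb, hle⟩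
    · intro h u hu
      obtain ⟨b, hb, hle⟩ := h u hu
      exact ⟨ρ b, ⟨b, hb, rfl⟩, hle⟩
  have memP : ∀ p : MvPolynomial (Fin n) K,
      p ∈ P ↔ ∀ u ∈ p.support, ∃ i ∈ F, Finsupp.single i 1 ≤ u := by
    intro p
    have himg : (X : Fin n → MvPolynomial (Fin n) K) '' F
        = (fun a => (monomial a (1 : K) : MvPolynomial (Fin n) K))
            '' ((fun i => Finsupp.single i 1) '' F) := by
      rw [Set.image_image]
      rfl
    rw [hPF, himg, mem_ideal_span_monomial_image]
    constructor
    · intro h u hu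
      obtain ⟨t, ⟨i, hi, rfl⟩, hle⟩ := h u hu
      exact ⟨i, hi, hle⟩
    · intro h u hu
      obtain ⟨i, hi, hle⟩ := h u hu
      exact ⟨_, ⟨i, hi, rfl⟩, hle⟩
  have memM : ∀ q : MvPolynomial {i : Fin n // i ∈ F} K,
      q ∈ M ↔ ∀ u ∈ q.support, ∃ i, Finsupp.single i 1 ≤ u := by
    intro q
    have himg : Set.range (X : {i : Fin n // i ∈ F} → MvPolynomial {i : Fin n // i ∈ F} K)
        = (fun a => (monomial a (1 : K) : MvPolynomial {i : Fin n // i ∈ F} K))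
            '' ((fun i => Finsupp.single i 1) '' Set.univ) := by
      rw [Set.image_image, Set.image_univ]
      rfl
    rw [hM, himg, mem_ideal_span_monomial_image]
    constructor
    · intro h u hu
      obtain ⟨t, ⟨i, _, rfl⟩, hle⟩ := h u hu
      exact ⟨i, hle⟩
    · intro h u hu
      obtain ⟨i, hle⟩ := h u hu
      exact ⟨_, ⟨i, trivial, rfl⟩, hle⟩
  -- primality
  have hPprime : P.IsPrime := by
    rw [hPF, span_X_eq_ker F]
    exact RingHom.ker_isPrime _
  have hMprime : M.IsPrime := by
    rw [hM, show Set.range (X : {i : Fin n // i ∈ F} → MvPolynomial {i : Fin n // i ∈ F} K)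
        = (X : {i : Fin n // i ∈ F} → MvPolynomial {i : Fin n // i ∈ F} K) '' Set.univ from
        (Set.image_univ).symm, span_X_eq_ker Set.univ]
    exact RingHom.ker_isPrime _
  -- the combinatorial bridge
  have h41 : P ∈ associatedPrimes (MvPolynomial (Fin n) K) (MvPolynomial (Fin n) K ⧸ I ^ s) →
      ∃ c, (∀ b ∈ B, ¬ ρ b ≤ c) ∧
        ∀ i : {i : Fin n // i ∈ F}, ∃ b ∈ B, ρ b ≤ c + Finsupp.single i 1 := by
    intro hass
    obtain ⟨hpr, x, hx⟩ := isAssociatedPrime_iff.mp hass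
    obtain ⟨f, rfl⟩ := Ideal.Quotient.mk_surjective x
    have hchar : ∀ r, r ∈ P ↔ r * f ∈ I ^ s := fun r => by rw [hx, mem_ann_iff]
    have hex : ∃ u ∈ f.support, ∀ b ∈ B, ¬ ρ b ≤ ρ u := by
      by_contra hcon
      push_neg at hcon
      choose g hg1 hg2 using hcon
      set N := f.support.attach.sup (fun u => Finset.univ.sup (fun j => g u.1 u.2 j)) with hN
      set e : Fin n →₀ ℕ :=
        Finsupp.equivFunOnFinite.symm (fun j => if j ∈ F then 0 else N) with he
      have hmul : f * monomial e 1 ∈ I ^ s := by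
        rw [memIs]
        intro u hu
        refine ⟨g u hu, hg1 u hu, Finsupp.le_def.mpr fun j => ?_⟩
        have heval : ∀ j', e j' = if j' ∈ F then 0 else N := fun j' => by
          rw [he]; rfl
        by_cases hj : j ∈ F
        · have h1 : (g u hu) j ≤ u j := by
            have := hg2 u hu ⟨j, hj⟩
            simpa [hρ, Finsupp.subtypeDomain_apply] using this
          have : (u + e) j = u j + e j := Finsupp.add_apply u e j
          omega
        · have h1 : (g u hu) j ≤ N := by
            refine le_trans (Finset.le_sup (f := fun j' => g u hu j') (Finset.mem_univ j)) ?_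
            exact Finset.le_sup (f := fun u' : {x // x ∈ f.support} =>
              Finset.univ.sup (fun j' => g u'.1 u'.2 j')) (Finset.mem_attach _ ⟨u, hu⟩)
          have h2 : e j = N := by rw [heval, if_neg hj]
          have : (u + e) j = u j + e j := Finsupp.add_apply u e j
          omega
      have hmem : (monomial e 1 : MvPolynomial (Fin n) K) ∈ P := by
        rw [hchar, mul_comm]; exact hmul
      rw [memP] at hmem
      obtain ⟨i, hiF, hile⟩ := hmem e (by
        rw [mem_support_iff, coeff_monomial, if_pos rfl]; exact one_ne_zero)
      have h1 : 1 ≤ e i := Finsupp.single_le_iff.mp hile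
      have h2 : e i = 0 := by rw [he]; show (if i ∈ F then 0 else N) = 0; rw [if_pos hiF]
      omega
    obtain ⟨u, hu, hua⟩ := hex
    refine ⟨ρ u, hua, fun i => ?_⟩
    have hXi : (X (i : Fin n) : MvPolynomial (Fin n) K) ∈ P :=
      hPF ▸ Ideal.subset_span ⟨(i : Fin n), i.2, rfl⟩
    have hXf : (X (i : Fin n) : MvPolynomial (Fin n) K) * f ∈ I ^ s := (hchar _).mp hXi
    rw [mul_comm,
      show (X (i : Fin n) : MvPolynomial (Fin n) K)
        = monomial (Finsupp.single (i : Fin n) 1) 1 from rfl, memIs] at hXf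
    obtain ⟨b, hb, hble⟩ := hXf u hu
    refine ⟨b, hb, Finsupp.le_def.mpr fun j => ?_⟩
    have h1 := Finsupp.le_def.mp hble (j : Fin n)
    rw [Finsupp.add_apply] at h1
    have h2 : (Finsupp.single ((i : Fin n)) 1) (j : Fin n) = (Finsupp.single i 1) j := by
      rcases eq_or_ne i j with hij | hij
      · subst hij; simp
      · rw [Finsupp.single_apply, Finsupp.single_apply, if_neg (fun hc => hij (Subtype.ext hc)),
          if_neg hij]
    rw [Finsupp.add_apply]
    simp only [hρ, Finsupp.subtypeDomain_apply]
    omega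
  have h14 : (∃ c, (∀ b ∈ B, ¬ ρ b ≤ c) ∧
        ∀ i : {i : Fin n // i ∈ F}, ∃ b ∈ B, ρ b ≤ c + Finsupp.single i 1) →
      P ∈ associatedPrimes (MvPolynomial (Fin n) K) (MvPolynomial (Fin n) K ⧸ I ^ s) := by
    rintro ⟨c, hc1, hc2⟩
    choose bf hb1 hb2 using hc2
    haveI : Fintype {i : Fin n // i ∈ F} := Fintype.ofFinite _
    set N := Finset.univ.sup
      (fun i : {i : Fin n // i ∈ F} => Finset.univ.sup (fun j => bf i j)) with hN
    set e : Fin n →₀ ℕ :=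
      Finsupp.equivFunOnFinite.symm (fun j => if hj : j ∈ F then c ⟨j, hj⟩ else N) with he
    have heval : ∀ j', e j' = if hj : j' ∈ F then c ⟨j', hj⟩ else N := fun j' => by
      rw [he]; rfl
    refine isAssociatedPrime_iff.mpr ⟨hPprime, Ideal.Quotient.mk _ (monomial e 1), ?_⟩
    ext r
    rw [mem_ann_iff, memP, memIs]
    constructor
    · intro h u hu
      obtain ⟨i, hiF, hile⟩ := h u hu
      refine ⟨bf ⟨i, hiF⟩, hb1 _, Finsupp.le_def.mpr fun j => ?_⟩
      have hadd : (u + e) j = u j + e j := Finsupp.add_apply u e j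
      by_cases hj : j ∈ F
      · have h1 := Finsupp.le_def.mp (hb2 ⟨i, hiF⟩) ⟨j, hj⟩
        simp only [hρ, Finsupp.subtypeDomain_apply, Finsupp.add_apply] at h1
        have h2 : (Finsupp.single (⟨i, hiF⟩ : {i : Fin n // i ∈ F}) 1) ⟨j, hj⟩ ≤ u j := by
          by_cases hij : i = j
          · subst hij
            have : 1 ≤ u i := Finsupp.single_le_iff.mp hile
            simpa [Finsupp.single_apply] using this
          · rw [Finsupp.single_apply, if_neg (fun hi => hij (congrArg Subtype.val hi))]
            exact Nat.zero_le _
        have h3 : e j = c ⟨j, hj⟩ := by rw [heval, dif_pos hj]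
        omega
      · have h1 : (bf ⟨i, hiF⟩) j ≤ N := by
          refine le_trans (Finset.le_sup (f := fun j' => bf ⟨i, hiF⟩ j') (Finset.mem_univ j)) ?_
          exact Finset.le_sup (f := fun i' : {i : Fin n // i ∈ F} =>
            Finset.univ.sup (fun j' => bf i' j')) (Finset.mem_univ _)
        have h2 : e j = N := by rw [heval, dif_neg hj]
        omega
    · intro h u hu
      obtain ⟨b, hb, hble⟩ := h u hu
      by_contra hcon
      push_neg at hcon
      refine hc1 b hb (Finsupp.le_def.mpr fun i => ?_)
      have h1 : b (i : Fin n) ≤ u (i : Fin n) + e (i : Fin n) := by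
        have := Finsupp.le_def.mp hble (i : Fin n)
        rwa [Finsupp.add_apply] at this
      have h2 : u (i : Fin n) = 0 := by
        have := hcon (i : Fin n) i.2
        rw [Finsupp.single_le_iff] at this
        omega
      have h3 : e (i : Fin n) = c i := by rw [heval, dif_pos i.2]
      show ρ b i ≤ c i
      simp only [hρ, Finsupp.subtypeDomain_apply]
      omega
  have h21 : (∃ c, (∀ b ∈ B, ¬ ρ b ≤ c) ∧
        ∀ i : {i : Fin n // i ∈ F}, ∃ b ∈ B, ρ b ≤ c + Finsupp.single i 1) →
      M ∈ associatedPrimes (MvPolynomial {i : Fin n // i ∈ F} K)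
        (MvPolynomial {i : Fin n // i ∈ F} K ⧸ J ^ s) := by
    rintro ⟨c, hc1, hc2⟩
    refine isAssociatedPrime_iff.mpr ⟨hMprime, Ideal.Quotient.mk _ (monomial c 1), ?_⟩
    ext r
    rw [mem_ann_iff, memM, memJs]
    constructor
    · intro h u hu
      obtain ⟨i, hile⟩ := h u hu
      obtain ⟨b, hb, hble⟩ := hc2 i
      refine ⟨b, hb, le_trans hble (Finsupp.le_def.mpr fun j => ?_)⟩
      have h1 : (Finsupp.single i 1) j ≤ u j := by
        by_cases hij : i = j
        · subst hij
          simpa [Finsupp.single_apply] using Finsupp.single_le_iff.mp hile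
        · rw [Finsupp.single_apply, if_neg hij]; exact Nat.zero_le _
      rw [Finsupp.add_apply, Finsupp.add_apply]
      omega
    · intro h u hu
      obtain ⟨b, hb, hble⟩ := h u hu
      have hu0 : u ≠ 0 := by
        rintro rfl
        exact hc1 b hb (by simpa using hble)
      obtain ⟨i, hi⟩ := Finsupp.ne_iff.mp hu0
      refine ⟨i, Finsupp.single_le_iff.mpr ?_⟩
      have : u i ≠ 0 := by simpa using hi
      omega
  have h12 : M ∈ associatedPrimes (MvPolynomial {i : Fin n // i ∈ F} K)
        (MvPolynomial {i : Fin n // i ∈ F} K ⧸ J ^ s) →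
      ∃ c, (∀ b ∈ B, ¬ ρ b ≤ c) ∧
        ∀ i : {i : Fin n // i ∈ F}, ∃ b ∈ B, ρ b ≤ c + Finsupp.single i 1 := by
    intro hass
    obtain ⟨hpr, x, hx⟩ := isAssociatedPrime_iff.mp hass
    obtain ⟨h, rfl⟩ := Ideal.Quotient.mk_surjective x
    have hchar : ∀ r, r ∈ M ↔ r * h ∈ J ^ s := fun r => by rw [hx, mem_ann_iff]
    have hone : (monomial (0 : {i : Fin n // i ∈ F} →₀ ℕ) (1 : K) :
        MvPolynomial {i : Fin n // i ∈ F} K) = 1 := by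
      rw [monomial_zero', C_1]
    have hnot : h ∉ J ^ s := by
      intro hmem
      exact hpr.ne_top ((Ideal.eq_top_iff_one _).mpr ((hchar 1).mpr (by rwa [one_mul])))
    have hh : ¬ ∀ u ∈ h.support, ∃ b ∈ B, ρ b ≤ u := by
      intro hall
      apply hnot
      rw [show h = h * monomial 0 1 by rw [hone, mul_one], memJs]
      intro u hu
      obtain ⟨b, hb, hble⟩ := hall u hu
      exact ⟨b, hb, by simpa using hble⟩
    push_neg at hh
    obtain ⟨u, hu, hua⟩ := hh
    refine ⟨u, hua, fun i => ?_⟩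
    have hXi : (X i : MvPolynomial {i : Fin n // i ∈ F} K) ∈ M :=
      Ideal.subset_span (Set.mem_range_self i)
    have hXh : (X i : MvPolynomial {i : Fin n // i ∈ F} K) * h ∈ J ^ s := (hchar _).mp hXi
    rw [mul_comm, show (X i : MvPolynomial {i : Fin n // i ∈ F} K)
      = monomial (Finsupp.single i 1) 1 from rfl, memJs] at hXh
    obtain ⟨b, hb, hble⟩ := hXh u hu
    exact ⟨b, hb, hble⟩
  exact ⟨fun hass => h21 (h41 hass), fun hass => h14 (h12 hass)⟩
end
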